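/- arXiv:2310.03637 — 2 statements merged into one kernel-verified Lean document; each statement's English description precedes it below -/
import Mathlib

section
/- Let K be an algebraically closed field and let F = {f_1,…,f_m} ⊆ K[x_1,…,x_n] be a polynomial system such that (F) ≠ (1) and the ideal (F) is zero-dimensional. Then the homogenized ideal (F^h) is in generic coordinates if and only if the degree of regularity d_reg(F) is finite, i.e., if and only if there exists d ≥ 0 such that every homogeneous polynomial of degree d lies in the ideal (F^top). -/
open MvPolynomial

/-! ### Term orders, initial ideals and Gröbner bases -/

/-- Total degree of an exponent vector. -/
def expDeg {σ : Type*} (a : σ →₀ ℕ) : ℕ := a.sum fun _ e => e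

/-- Degree reverse lexicographic strict order on exponent vectors; `sig j i` reads
"`j` is strictly less significant than `i`".  `a` is DRL-smaller than `b` iff its total degree
is smaller, or the degrees agree and at the least significant variable where they differ the
exponent of `a` is larger. -/
def drlLT {σ : Type*} (sig : σ → σ → Prop) (a b : σ →₀ ℕ) : Prop :=
  expDeg a < expDeg b ∨
    (expDeg a = expDeg b ∧ ∃ i, b i < a i ∧ ∀ j, sig j i → a j = b j)

/-- Lexicographic strict order on exponent vectors; `sig i j` reads "`i` is strictly less
significant than `j`".  `a` is LEX-smaller than `b` iff at the most significant variable where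
they differ the exponent of `a` is smaller. -/
def lexLT {σ : Type*} (sig : σ → σ → Prop) (a b : σ →₀ ℕ) : Prop :=
  ∃ i, a i < b i ∧ ∀ j, sig i j → a j = b j

/-- Significance relation on `Fin N` for which the variable significance is strictly
decreasing in the index (`x_0 > x_1 > ⋯`):  `sigDes i j` iff `i` is less significant
than `j`, i.e. `j < i`. -/
def sigDes {N : ℕ} (i j : Fin N) : Prop := j < i

/-- Significance relation on `Fin (N+1)` for a homogenized polynomial ring: the homogenization
variable `x_0` (index `0`) is the least significant variable, and among the remaining variables
the significance is strictly decreasing in the index. -/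
def sigH {N : ℕ} (i j : Fin (N + 1)) : Prop := j ≠ 0 ∧ (i = 0 ∨ j < i)

/-- `a` is the leading monomial (exponent vector) of `f` w.r.t. the strict term order `lt`. -/
def IsLeadMono {σ K : Type*} [CommSemiring K] (lt : (σ →₀ ℕ) → (σ →₀ ℕ) → Prop)
    (f : MvPolynomial σ K) (a : σ →₀ ℕ) : Prop :=
  a ∈ f.support ∧ ∀ b ∈ f.support, b ≠ a → lt b a

/-- The initial ideal of `I` w.r.t. the strict term order `lt`: the ideal generated by the
leading monomials of the nonzero elements of `I`. -/
noncomputable def initialIdeal {σ K : Type*} [CommSemiring K]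
    (lt : (σ →₀ ℕ) → (σ →₀ ℕ) → Prop) (I : Ideal (MvPolynomial σ K)) :
    Ideal (MvPolynomial σ K) :=
  Ideal.span {mf | ∃ f ∈ I, f ≠ 0 ∧ ∃ a, IsLeadMono lt f a ∧ mf = monomial a (1 : K)}

/-- `G` is a Gröbner basis of `I` w.r.t. the strict term order `lt`: `G ⊆ I` and the leading
monomials of the elements of `G` generate the initial ideal of `I`. -/
def IsGroebner {σ K : Type*} [CommSemiring K] (lt : (σ →₀ ℕ) → (σ →₀ ℕ) → Prop)
    (G : Set (MvPolynomial σ K)) (I : Ideal (MvPolynomial σ K)) : Prop :=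
  G ⊆ (I : Set (MvPolynomial σ K)) ∧
    Ideal.span {mf | ∃ g ∈ G, g ≠ 0 ∧ ∃ a, IsLeadMono lt g a ∧ mf = monomial a (1 : K)}
      = initialIdeal lt I

/-! ### Saturation, projective zero loci, generic coordinates, homogenization -/

/-- The saturation `I : (x_0, …, x_n)^∞ = ⋃_k (I : (x_0, …, x_n)^k)` of an ideal of a
polynomial ring with respect to the maximal ideal generated by all the variables. -/
noncomputable def maxSat {K : Type*} [Field K] {σ : Type*}
    (I : Ideal (MvPolynomial σ K)) : Ideal (MvPolynomial σ K) :=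
  ⨆ k : ℕ, Submodule.colon I (((Ideal.span (Set.range (X : σ → MvPolynomial σ K))) ^ k : Ideal (MvPolynomial σ K)) : Set (MvPolynomial σ K))

/-- The projective zero locus of `I` over the algebraic closure of `K`. -/
noncomputable def projZerosBar {K : Type*} [Field K] {σ : Type*}
    (I : Ideal (MvPolynomial σ K)) :
    Set (Projectivization (AlgebraicClosure K) (σ → AlgebraicClosure K)) :=
  {x | ∀ f ∈ I, eval x.rep (map (algebraMap K (AlgebraicClosure K)) f) = 0}

/-- `I` is in generic coordinates (w.r.t. the homogenization variable `v0`): its projective zero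
locus over the algebraic closure is finite, and either it is empty or `X v0` is a nonzerodivisor
modulo the saturation `I^sat`. -/
def GenCoords {K : Type*} [Field K] {σ : Type*} (v0 : σ)
    (I : Ideal (MvPolynomial σ K)) : Prop :=
  (projZerosBar I).Finite ∧
    (projZerosBar I = ∅ ∨ ∀ f, X v0 * f ∈ maxSat I → f ∈ maxSat I)

/-- Homogenization of `f` with respect to a new variable `x_0` placed at index `0`; the original
variables are shifted along `Fin.succ`. -/
noncomputable def homogPoly {K : Type*} [CommSemiring K] {q : ℕ}
    (f : MvPolynomial (Fin q) K) : MvPolynomial (Fin (q + 1)) K :=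
  f.support.sum fun a =>
    monomial (Finsupp.single (0 : Fin (q + 1)) (f.totalDegree - expDeg a)
      + a.mapDomain Fin.succ) (f.coeff a)

/-- Dehomogenization: substitute `x_0 ↦ 1` and shift the remaining variables back. -/
noncomputable def dehomAlg {K : Type*} [Field K] (n : ℕ) :
    MvPolynomial (Fin (n + 1)) K →ₐ[K] MvPolynomial (Fin n) K :=
  aeval fun i => Fin.cases (1 : MvPolynomial (Fin n) K) (fun j => X j) i

/-- An ideal of a polynomial ring is homogeneous if it contains all homogeneous components of
its elements. -/
def IsHomogIdeal {σ K : Type*} [CommSemiring K] (I : Ideal (MvPolynomial σ K)) : Prop :=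
  ∀ f ∈ I, ∀ d : ℕ, MvPolynomial.homogeneousComponent d f ∈ I

/-- The highest degree homogeneous component `f^top` of a polynomial. -/
noncomputable def topComp {σ K : Type*} [CommSemiring K] (f : MvPolynomial σ K) :
    MvPolynomial σ K :=
  MvPolynomial.homogeneousComponent f.totalDegree f

/-! ### Keyed iterated polynomial systems -/

open Fin.NatCast in
/-- The univariate keyed iterated polynomial system attached to the bivariate polynomials
`g_1, …, g_n` (with `n = m + 1`, indexed here by `k = 0, …, m`), the plaintext `p` and the
ciphertext `c`.  The ambient ring is `K[x_1, …, x_m, y]`, where `x_j` has variable index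
`j - 1` and `y` has variable index `m`; in the bivariate ring `K[x, y]`, `x` has index `0`
and `y` has index `1`.  Explicitly, `keyedF m g p c 0 = g 1 (p, y) - x 1`,
`keyedF m g p c k = g (k+1) (x k, y) - x (k+1)` for `1 ≤ k ≤ m - 1` and
`keyedF m g p c m = g (m+1) (x m, y) - c`. -/
noncomputable def keyedF {K : Type*} [Field K] (m : ℕ)
    (g : ℕ → MvPolynomial (Fin 2) K) (p c : K) (k : ℕ) :
    MvPolynomial (Fin (m + 1)) K :=
  aeval ![if k = 0 then C p else X (((k - 1 : ℕ)) : Fin (m + 1)),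
          X ((m : ℕ) : Fin (m + 1))] (g k)
    - (if k < m then X ((k : ℕ) : Fin (m + 1)) else C c)

/-- The chain `ĝ_1 = g_1(p, y)`, `ĝ_{k+1} = g_{k+1}(ĝ_k(y), y)` of univariate polynomials
(0-based indexing: `ghat g p k = ĝ_{k+1}`). -/
noncomputable def ghat {K : Type*} [Field K] (g : ℕ → MvPolynomial (Fin 2) K)
    (p : K) : ℕ → Polynomial K
  | 0 => aeval ![Polynomial.C p, Polynomial.X] (g 0)
  | (k + 1) => aeval ![ghat g p k, Polynomial.X] (g (k + 1))

open Fin.NatCast in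
/-- Embed a univariate polynomial into `K[x_1, …, x_m, y]` via the variable `y`. -/
noncomputable def yPoly {K : Type*} [Field K] (m : ℕ) (q : Polynomial K) :
    MvPolynomial (Fin (m + 1)) K :=
  Polynomial.aeval (X ((m : ℕ) : Fin (m + 1))) q

/-- The (monic, up to a unit) greatest common divisor of two univariate polynomials over a
field. -/
noncomputable def polyGCD {K : Type*} [Field K] (f g : Polynomial K) : Polynomial K :=
  @EuclideanDomain.gcd _ _ (Classical.decEq _) f g

/-- The number of distinct roots of a univariate polynomial in the base field. -/
noncomputable def numRoots {K : Type*} [Field K] (f : Polynomial K) : ℕ :=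
  letI := Classical.decEq K
  f.roots.toFinset.card

/-! ### Feistel-2n/n keyed iterated polynomial systems -/

open Fin.NatCast in
/-- The nonlinear ("left branch") polynomials of the keyed iterated polynomial system for
Feistel-`2n/n` (with `n = m + 1`, indexed here by `k = 0, …, m`).  The ambient ring is
`K[x_{L,1}, x_{R,1}, …, x_{L,m}, x_{R,m}, y]` where `x_{L,j}` has variable index `2(j-1)`,
`x_{R,j}` has variable index `2(j-1) + 1` and `y` has variable index `2m`. -/
noncomputable def fstL {K : Type*} [Field K] (m : ℕ) (g : ℕ → MvPolynomial (Fin 2) K)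
    (pL pR cL : K) (k : ℕ) : MvPolynomial (Fin (2 * m + 1)) K :=
  (if k = 0 then C pR else X (((2 * (k - 1) + 1 : ℕ)) : Fin (2 * m + 1)))
  + aeval ![if k = 0 then C pL else X (((2 * (k - 1) : ℕ)) : Fin (2 * m + 1)),
            X (((2 * m : ℕ)) : Fin (2 * m + 1))] (g k)
  - (if k < m then X (((2 * k : ℕ)) : Fin (2 * m + 1)) else C cL)

open Fin.NatCast in
/-- The linear ("right branch") polynomials of the keyed iterated polynomial system for
Feistel-`2n/n` (same variable conventions as in `fstL`). -/
noncomputable def fstR {K : Type*} [Field K] (m : ℕ) (pL cR : K) (k : ℕ) :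
    MvPolynomial (Fin (2 * m + 1)) K :=
  (if k = 0 then C pL else X (((2 * (k - 1) : ℕ)) : Fin (2 * m + 1)))
  - (if k < m then X (((2 * k + 1 : ℕ)) : Fin (2 * m + 1)) else C cR)

open Fin.NatCast in
/-- The downsized Feistel system `H = {f̃_1, …, f̃_n}` (with `n = m + 1`, indexed here by
`k = 0, …, m`), obtained by substituting the linear polynomials into the nonlinear ones.  The
ambient ring is `K[x_{R,2}, …, x_{R,m}, x_{L,m}, y]` where `x_{R,j}` has variable index
`j - 2`, `x_{L,m}` has variable index `m - 1` and `y` has variable index `m`. -/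
noncomputable def hTil {K : Type*} [Field K] (m : ℕ) (g : ℕ → MvPolynomial (Fin 2) K)
    (pL pR cL : K) (k : ℕ) : MvPolynomial (Fin (m + 1)) K :=
  (if k = 0 then C pR else if k = 1 then C pL else X (((k - 2 : ℕ)) : Fin (m + 1)))
  + aeval ![if k = 0 then C pL else X (((k - 1 : ℕ)) : Fin (m + 1)),
            X ((m : ℕ) : Fin (m + 1))] (g k)
  - (if k < m then X ((k : ℕ) : Fin (m + 1)) else C cL)

/-- The chain `ĥ_1 = p_R + g_1(p_L, y)`, `ĥ_2 = p_L + g_2(ĥ_1, y)`,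
`ĥ_i = ĥ_{i-2} + g_i(ĥ_{i-1}, y)` of univariate polynomials (0-based indexing:
`hHat g pL pR k = ĥ_{k+1}`). -/
noncomputable def hHat {K : Type*} [Field K] (g : ℕ → MvPolynomial (Fin 2) K)
    (pL pR : K) : ℕ → Polynomial K
  | 0 => Polynomial.C pR + aeval ![Polynomial.C pL, Polynomial.X] (g 0)
  | 1 => Polynomial.C pL + aeval ![hHat g pL pR 0, Polynomial.X] (g 1)
  | (k + 2) => hHat g pL pR k + aeval ![hHat g pL pR (k + 1), Polynomial.X] (g (k + 2))

/-! ### Two plain/ciphertext systems -/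

open Fin.NatCast in
/-- A univariate keyed iterated polynomial system placed inside the ring
`K[u_1, …, u_m, v_1, …, v_m, y]` (`u_j` has index `j - 1`, `v_j` has index `m + j - 1`, `y` has
index `2m`), with the state variables offset by `off` (so `off = 0` uses the `u`-variables and
`off = m` the `v`-variables). -/
noncomputable def twoF {K : Type*} [Field K] (m : ℕ) (g : ℕ → MvPolynomial (Fin 2) K)
    (p c : K) (off : ℕ) (k : ℕ) : MvPolynomial (Fin (2 * m + 1)) K :=
  aeval ![if k = 0 then C p else X (((off + (k - 1) : ℕ)) : Fin (2 * m + 1)),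
          X (((2 * m : ℕ)) : Fin (2 * m + 1))] (g k)
  - (if k < m then X (((off + k : ℕ)) : Fin (2 * m + 1)) else C c)

/-! ### Macaulay spaces, degree falls, last fall degree, satiety, degree of regularity -/

/-- The row space `W_{F,d}` of the degree-`d` inhomogeneous Macaulay matrix of the system `F`:
all polynomials of the form `∑ gᵢ·fᵢ` with `deg (gᵢ·fᵢ) ≤ d` for every `i`. -/
def Wsp {σ K ι : Type*} [CommSemiring K] [Fintype ι]
    (F : ι → MvPolynomial σ K) (d : ℕ) : Set (MvPolynomial σ K) :=
  {f | ∃ g : ι → MvPolynomial σ K, f = ∑ i, g i * F i ∧ ∀ i, (g i * F i).totalDegree ≤ d}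

/-- `d_f`: the least degree `d` with `f ∈ W_{F,d}`. -/
noncomputable def dfall {σ K ι : Type*} [CommSemiring K] [Fintype ι]
    (F : ι → MvPolynomial σ K) (f : MvPolynomial σ K) : ℕ :=
  sInf {d : ℕ | f ∈ Wsp F d}

/-- The last fall degree `d_F ∈ ℕ ∪ {∞}`: the least `d` such that every `f` in the ideal
generated by `F` lies in `W_{F, max (d, deg f)}` (the value `∞` imposes no condition since
`W_{F,∞} = (F)`). -/
noncomputable def lastFall {σ K ι : Type*} [CommSemiring K] [Fintype ι]
    (F : ι → MvPolynomial σ K) : ℕ∞ :=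
  sInf {d : ℕ∞ | ∀ e : ℕ, d = (e : ℕ∞) →
    ∀ f ∈ Ideal.span (Set.range F), f ∈ Wsp F (max e f.totalDegree)}

/-- The satiety of a homogeneous ideal: the least `s` such that `I` and `I^sat` agree in all
degrees `l ≥ s`. -/
noncomputable def satiety {σ K : Type*} [Field K] (I : Ideal (MvPolynomial σ K)) : ℕ :=
  sInf {s : ℕ | ∀ l, s ≤ l → ∀ f : MvPolynomial σ K, f.IsHomogeneous l →
    (f ∈ I ↔ f ∈ maxSat I)}

/-- The degree of regularity `d_reg(F) ∈ ℕ ∪ {∞}` of a polynomial system: the least `d` such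
that every homogeneous polynomial of degree `d` lies in the ideal generated by the highest
degree components `F^top`. -/
noncomputable def dregSys {σ K : Type*} [CommSemiring K] (F : Set (MvPolynomial σ K)) : ℕ∞ :=
  sInf {e : ℕ∞ | ∃ d : ℕ, e = (d : ℕ∞) ∧ ∀ f : MvPolynomial σ K, f.IsHomogeneous d →
    f ∈ Ideal.span (topComp '' F)}

/-! ### Auxiliary lemmas for Statement 4 -/

section Stmt4Aux

open Projectivization

/- basic facts about `expDeg` -/

lemma expDeg_eq_degree {σ : Type*} (a : σ →₀ ℕ) : expDeg a = a.degree := rfl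

lemma expDeg_single {σ : Type*} (i : σ) (k : ℕ) : expDeg (Finsupp.single i k) = k := by
  simp [expDeg, Finsupp.sum_single_index]

lemma expDeg_add {σ : Type*} (a b : σ →₀ ℕ) : expDeg (a + b) = expDeg a + expDeg b := by
  classical
  simp [expDeg, Finsupp.sum_add_index']

lemma expDeg_mapDomain {σ τ : Type*} (g : σ → τ) (a : σ →₀ ℕ) :
    expDeg (a.mapDomain g) = expDeg a := by
  classical
  simp [expDeg, Finsupp.sum_mapDomain_index]

/- evaluation and ring maps -/

lemma eval_map_comp {K L : Type*} [CommSemiring K] [CommSemiring L] {σ : Type*}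
    (φ : K →+* L) (a : σ → K) (p : MvPolynomial σ K) :
    eval (fun i => φ (a i)) (map φ p) = φ (eval a p) := by
  rw [eval_map]
  have : eval a p = eval₂Hom (RingHom.id K) a p := rfl
  rw [this, map_eval₂Hom]
  rfl

lemma IsHomog.eval_smul {L : Type*} [CommSemiring L] {σ : Type*}
    {h : MvPolynomial σ L} {D : ℕ} (hh : h.IsHomogeneous D)
    (c : L) (v : σ → L) : eval (c • v) h = c ^ D * eval v h := by
  conv_lhs => rw [as_sum h]
  conv_rhs => rw [as_sum h]
  rw [map_sum, map_sum, Finset.mul_sum]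
  refine Finset.sum_congr rfl fun d hd => ?_
  have hdeg : d.degree = D := by
    by_contra hne
    exact (mem_support_iff.1 hd) (hh.coeff_eq_zero hne)
  rw [eval_monomial, eval_monomial]
  have : (d.prod fun i e => (c • v) i ^ e) = c ^ D * d.prod fun i e => v i ^ e := by
    rw [Finsupp.prod, Finsupp.prod]
    have : ∀ i ∈ d.support, (c • v) i ^ d i = c ^ d i * v i ^ d i := by
      intro i _
      simp [Pi.smul_apply, smul_eq_mul, mul_pow]
    rw [Finset.prod_congr rfl this, Finset.prod_mul_distrib, ← hdeg, Finsupp.degree,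
      Finset.prod_pow_eq_pow_sum]
    rfl
  rw [this]; ring

lemma span_eval_zero_map {K L : Type*} [CommRing K] [CommRing L] {σ : Type*}
    (φ : K →+* L) (S : Set (MvPolynomial σ K)) (v : σ → L)
    (h : ∀ g ∈ S, eval v (map φ g) = 0) :
    ∀ f ∈ Ideal.span S, eval v (map φ f) = 0 := by
  intro f hf
  have hle : Ideal.span S ≤ RingHom.ker ((eval v).comp (map φ)) := by
    apply Ideal.span_le.2
    intro g hg
    exact h g hg
  exact hle hf

lemma span_eval_zero {K : Type*} [CommRing K] {σ : Type*}
    (S : Set (MvPolynomial σ K)) (v : σ → K)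
    (h : ∀ g ∈ S, eval v g = 0) :
    ∀ f ∈ Ideal.span S, eval v f = 0 := by
  intro f hf
  have hle : Ideal.span S ≤ RingHom.ker (eval v) := by
    apply Ideal.span_le.2
    intro g hg
    exact h g hg
  exact hle hf

/- facts about `homogPoly` -/

lemma homogPoly_isHomogeneous {K : Type*} [CommSemiring K] {q : ℕ}
    (f : MvPolynomial (Fin q) K) :
    (homogPoly f).IsHomogeneous f.totalDegree := by
  apply IsHomogeneous.sum
  intro a ha
  apply isHomogeneous_monomial
  rw [← expDeg_eq_degree, expDeg_add, expDeg_single, expDeg_mapDomain]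
  exact Nat.sub_add_cancel (le_totalDegree ha)

lemma eval_cons_homogPoly {K : Type*} [CommSemiring K] {q : ℕ}
    (f : MvPolynomial (Fin q) K) (x : K) (t : Fin q → K) :
    eval (Fin.cons x t) (homogPoly f) =
      ∑ a ∈ f.support,
        f.coeff a * (x ^ (f.totalDegree - expDeg a) * a.prod fun i e => t i ^ e) := by
  rw [homogPoly, map_sum]
  refine Finset.sum_congr rfl fun a _ => ?_
  rw [eval_monomial]
  rw [Finsupp.prod_add_index' (fun i => pow_zero _) (fun i e1 e2 => pow_add _ _ _)]
  rw [Finsupp.prod_mapDomain_index_inj (Fin.succ_injective _)]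
  simp only [Finsupp.prod_single_index, Finsupp.prod_pow, Fin.prod_univ_succ, Fin.cons_zero,
    Fin.cons_succ, Finsupp.single_apply, if_pos rfl]
  have : ∀ x_1 : Fin q,
      (if (0 : Fin (q+1)) = x_1.succ then t x_1 ^ (f.totalDegree - expDeg a) else 1) = 1 := by
    intro x1; rw [if_neg (Ne.symm (Fin.succ_ne_zero x1))]
  simp [this]

lemma eval_cons_one_homogPoly {K : Type*} [CommSemiring K] {q : ℕ}
    (f : MvPolynomial (Fin q) K) (t : Fin q → K) :
    eval (Fin.cons 1 t) (homogPoly f) = eval t f := by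
  rw [eval_cons_homogPoly]
  conv_rhs => rw [as_sum f]
  rw [map_sum]
  refine Finset.sum_congr rfl fun a _ => ?_
  rw [eval_monomial, one_pow, one_mul]

lemma eval_cons_zero_homogPoly {K : Type*} [CommSemiring K] {q : ℕ}
    (f : MvPolynomial (Fin q) K) (t : Fin q → K) :
    eval (Fin.cons 0 t) (homogPoly f) = eval t (topComp f) := by
  rw [eval_cons_homogPoly, topComp, homogeneousComponent_apply, map_sum,
    Finset.sum_filter]
  refine Finset.sum_congr rfl fun a ha => ?_
  by_cases h : a.degree = f.totalDegree
  · have : f.totalDegree - expDeg a = 0 := by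
      rw [expDeg_eq_degree, h]; exact Nat.sub_self _
    rw [if_pos h, this, pow_zero, one_mul, eval_monomial]
  · have hlt : expDeg a < f.totalDegree :=
      lt_of_le_of_ne (le_totalDegree ha) (by rw [expDeg_eq_degree]; exact h)
    rw [if_neg h, zero_pow (by omega), zero_mul, mul_zero]

lemma homogPoly_decomp {K : Type*} [CommSemiring K] {q : ℕ} (f : MvPolynomial (Fin q) K) :
    ∃ r, homogPoly f = (rename Fin.succ) (topComp f) + X 0 * r := by
  classical
  refine ⟨∑ a ∈ f.support.filter (fun a => ¬ a.degree = f.totalDegree),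
    monomial (Finsupp.single 0 (f.totalDegree - expDeg a - 1) + a.mapDomain Fin.succ)
      (f.coeff a), ?_⟩
  rw [homogPoly,
    ← Finset.sum_filter_add_sum_filter_not f.support (fun a => a.degree = f.totalDegree)]
  congr 1
  · rw [topComp, homogeneousComponent_apply, map_sum]
    refine Finset.sum_congr rfl fun a ha => ?_
    have h0 : f.totalDegree - expDeg a = 0 := by
      rw [expDeg_eq_degree, (Finset.mem_filter.1 ha).2]; exact Nat.sub_self _
    rw [rename_monomial, h0, Finsupp.single_zero, zero_add]
  · rw [Finset.mul_sum]
    refine Finset.sum_congr rfl fun a ha => ?_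
    obtain ⟨ha1, ha2⟩ := Finset.mem_filter.1 ha
    have hlt : expDeg a < f.totalDegree :=
      lt_of_le_of_ne (le_totalDegree ha1) (by rw [expDeg_eq_degree]; exact ha2)
    have hX : (X 0 : MvPolynomial (Fin (q+1)) K) = monomial (Finsupp.single 0 1) 1 := rfl
    have hk : 1 + (f.totalDegree - expDeg a - 1) = f.totalDegree - expDeg a := by omega
    rw [hX, monomial_mul, one_mul, ← add_assoc, ← Finsupp.single_add, hk]

/- facts about `maxSat` -/

lemma mem_maxSat {K : Type*} [Field K] {σ : Type*} {I : Ideal (MvPolynomial σ K)}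
    {f : MvPolynomial σ K} :
    f ∈ maxSat I ↔ ∃ k : ℕ,
      ∀ g ∈ (Ideal.span (Set.range (X : σ → MvPolynomial σ K))) ^ k, f * g ∈ I := by
  rw [maxSat, Submodule.mem_iSup_of_directed]
  · refine exists_congr fun k => ?_
    rw [Submodule.mem_colon]
    exact forall₂_congr fun g hg => by rw [smul_eq_mul]
  · exact (Monotone.directed_le fun k l hkl =>
      Submodule.colon_mono (le_refl I) (Ideal.pow_le_pow_right hkl))

lemma le_maxSat {K : Type*} [Field K] {σ : Type*} {I : Ideal (MvPolynomial σ K)} :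
    I ≤ maxSat I := by
  intro f hf
  rw [mem_maxSat]
  exact ⟨0, fun g _ => I.mul_mem_right g hf⟩

/- the ladder of monomial ideals -/

lemma ladder {K : Type*} [Field K] {n : ℕ}
    (I : Ideal (MvPolynomial (Fin (n+1)) K)) (J : Ideal (MvPolynomial (Fin n) K))
    (hJI : ∀ g ∈ J, (rename Fin.succ) g ∈ I ⊔ Ideal.span {(X 0 : MvPolynomial (Fin (n+1)) K)})
    {d : ℕ} (hd : ∀ f : MvPolynomial (Fin n) K, f.IsHomogeneous d → f ∈ J) :
    (Ideal.span (Set.range (X : Fin (n+1) → MvPolynomial (Fin (n+1)) K))) ^ d ≤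
      I ⊔ Ideal.span {(X 0 : MvPolynomial (Fin (n+1)) K)} := by
  classical
  let Q : Ideal (MvPolynomial (Fin (n+1)) K) := I ⊔ Ideal.span {X 0}
  let M : ℕ → Ideal (MvPolynomial (Fin (n+1)) K) := fun j =>
    Ideal.span ((fun a : Fin n →₀ ℕ => (monomial (a.mapDomain Fin.succ) (1:K))) ''
      {a | a.degree = j})
  have key : ∀ j,
      (Ideal.span (Set.range (X : Fin (n+1) → MvPolynomial (Fin (n+1)) K))) ^ j ≤ Q ⊔ M j := by
    intro j
    induction j with
    | zero =>
      have h1 : (1 : MvPolynomial (Fin (n+1)) K) ∈ M 0 := by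
        apply Ideal.subset_span
        refine ⟨0, by simp [map_zero], ?_⟩
        simp [Finsupp.mapDomain_zero, monomial_zero']
      rw [pow_zero, Ideal.one_eq_top]
      exact le_of_eq ((Ideal.eq_top_iff_one _).2 (Ideal.mem_sup_right h1)).symm
    | succ j ih =>
      rw [pow_succ]
      refine le_trans (Ideal.mul_mono ih (le_refl _)) ?_
      rw [Submodule.sup_mul]
      apply sup_le
      · refine le_trans ?_ (le_sup_left (b := M (j+1)))
        exact Ideal.mul_le.2 fun r hr s _ => Q.mul_mem_right s hr
      · show Ideal.span _ * Ideal.span _ ≤ _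
        rw [Ideal.span_mul_span']
        apply Ideal.span_le.2
        rintro x ⟨g1, hg1, g2, hg2, rfl⟩
        obtain ⟨a, ha, rfl⟩ := hg1
        obtain ⟨i, rfl⟩ := hg2
        have ha' : Finsupp.degree a = j := ha
        induction i using Fin.cases with
        | zero =>
          apply Ideal.mem_sup_left
          apply Ideal.mem_sup_right
          exact Ideal.mem_span_singleton'.2 ⟨monomial (a.mapDomain Fin.succ) 1, by ring⟩
        | succ i' =>
          apply Ideal.mem_sup_right
          show _ ∈ M (j+1)
          have hXe : (X (Fin.succ i') : MvPolynomial (Fin (n+1)) K) =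
            monomial (Finsupp.single (Fin.succ i') 1) 1 := rfl
          show (monomial (a.mapDomain Fin.succ) (1:K)) * X (Fin.succ i') ∈ _
          rw [hXe, monomial_mul, one_mul, ← Finsupp.mapDomain_single (f := Fin.succ),
            ← Finsupp.mapDomain_add]
          apply Ideal.subset_span
          refine ⟨a + Finsupp.single i' 1, ?_, rfl⟩
          show Finsupp.degree _ = j + 1
          rw [← expDeg_eq_degree, expDeg_add, expDeg_single, expDeg_eq_degree, ha']
  refine le_trans (key d) (sup_le (le_refl _) ?_)
  apply Ideal.span_le.2
  rintro x ⟨a, ha, rfl⟩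
  have h1 : ((monomial a (1:K)) : MvPolynomial (Fin n) K).IsHomogeneous d :=
    isHomogeneous_monomial _ ha
  have h2 := hJI _ (hd _ h1)
  rwa [rename_monomial] at h2

lemma powLadder {K : Type*} [Field K] {n : ℕ}
    (I : Ideal (MvPolynomial (Fin (n+1)) K)) (J : Ideal (MvPolynomial (Fin n) K))
    (hJI : ∀ g ∈ J, (rename Fin.succ) g ∈ I ⊔ Ideal.span {(X 0 : MvPolynomial (Fin (n+1)) K)})
    {d : ℕ} (hd : ∀ f : MvPolynomial (Fin n) K, f.IsHomogeneous d → f ∈ J) (k : ℕ) :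
    (Ideal.span (Set.range (X : Fin (n+1) → MvPolynomial (Fin (n+1)) K))) ^ (d * k) ≤
      I ⊔ Ideal.span {(X 0 : MvPolynomial (Fin (n+1)) K) ^ k} := by
  induction k with
  | zero =>
    rw [pow_zero, Ideal.span_singleton_one]
    exact le_trans le_top le_sup_right
  | succ k ih =>
    rw [Nat.mul_succ, pow_add]
    refine le_trans (Ideal.mul_mono ih (ladder I J hJI hd)) ?_
    rw [Submodule.sup_mul, Submodule.mul_sup, Submodule.mul_sup]
    apply sup_le <;> apply sup_le
    · exact le_trans (Ideal.mul_le.2 fun r hr s _ => I.mul_mem_right s hr) le_sup_left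
    · exact le_trans (Ideal.mul_le.2 fun r hr s _ => I.mul_mem_right s hr) le_sup_left
    · exact le_trans (Ideal.mul_le.2 fun r _ s hs => I.mul_mem_left r hs) le_sup_left
    · rw [Ideal.span_singleton_mul_span_singleton, ← pow_succ]
      exact le_sup_right

/- finiteness of the affine zero set of a zero-dimensional ideal -/

lemma zerosFinite {K : Type*} [Field K] {n m : ℕ} (F : Fin m → MvPolynomial (Fin n) K)
    (hdim : ringKrullDim (MvPolynomial (Fin n) K ⧸ Ideal.span (Set.range F)) = 0) :
    {a : Fin n → K | ∀ i, eval a (F i) = 0}.Finite := by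
  classical
  set A := MvPolynomial (Fin n) K ⧸ Ideal.span (Set.range F) with hA
  have hprime : ∀ (p q : Ideal A), p.IsPrime → q.IsPrime → q ≤ p → q = p := by
    intro p q hp hq hle
    by_contra hne
    have hlt : (⟨q, hq⟩ : PrimeSpectrum A) < ⟨p, hp⟩ := by
      constructor
      · exact hle
      · intro h
        exact hne (le_antisymm hle h)
    let s : LTSeries (PrimeSpectrum A) :=
      (RelSeries.singleton _ ⟨q, hq⟩).snoc ⟨p, hp⟩ (by simpa using hlt)
    have hlen := Order.LTSeries.length_le_krullDim s
    rw [show Order.krullDim (PrimeSpectrum A) = ringKrullDim A from rfl, hdim] at hlen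
    have : s.length = 1 := rfl
    rw [this] at hlen
    exact absurd hlen (by decide)
  have hker : ∀ a ∈ {a : Fin n → K | ∀ i, eval a (F i) = 0},
      Ideal.span (Set.range F) ≤ RingHom.ker (eval a) := by
    intro a ha
    apply Ideal.span_le.2
    rintro _ ⟨i, rfl⟩
    exact ha i
  let ψ : ∀ a ∈ {a : Fin n → K | ∀ i, eval a (F i) = 0}, A →+* K := fun a ha =>
    Ideal.Quotient.lift _ (eval a) (fun p hp => hker a ha hp)
  have hψmk : ∀ a ha (f : MvPolynomial (Fin n) K),
      ψ a ha (Ideal.Quotient.mk _ f) = eval a f := fun a ha f => rfl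
  have hmin : ∀ a ha, RingHom.ker (ψ a ha) ∈ minimalPrimes A := by
    intro a ha
    have hp : (RingHom.ker (ψ a ha)).IsPrime := RingHom.ker_isPrime _
    refine ⟨⟨hp, bot_le⟩, ?_⟩
    rintro q ⟨hq, -⟩ hle
    exact le_of_eq (hprime _ _ hp hq hle).symm
  have hfin : (minimalPrimes A).Finite := minimalPrimes.finite_of_isNoetherianRing A
  have hinj : Set.InjOn
      (fun a : Fin n → K => if ha : a ∈ {a : Fin n → K | ∀ i, eval a (F i) = 0}
        then RingHom.ker (ψ a ha) else ⊥)
      {a : Fin n → K | ∀ i, eval a (F i) = 0} := by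
    intro a ha b hb hab
    dsimp only at hab
    rw [dif_pos ha, dif_pos hb] at hab
    by_contra hne
    obtain ⟨i, hi⟩ := Function.ne_iff.1 hne
    have h1 : (Ideal.Quotient.mk _ (X i - C (a i)) : A) ∈ RingHom.ker (ψ a ha) := by
      rw [RingHom.mem_ker, hψmk a ha]
      simp
    rw [hab, RingHom.mem_ker, hψmk b hb] at h1
    simp only [map_sub, eval_X, eval_C] at h1
    exact hi (sub_eq_zero.mp h1).symm
  refine Set.Finite.of_finite_image ?_ hinj
  apply hfin.subset
  rintro _ ⟨a, ha, rfl⟩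
  simp only [dif_pos ha]
  exact hmin a ha

/- a Nullstellensatz consequence -/

lemma exists_nonzero_zero_of_not_rhs {K : Type*} [Field K] [IsAlgClosed K] {n : ℕ}
    (J : Ideal (MvPolynomial (Fin n) K))
    (hJ : ¬ ∃ d : ℕ, ∀ f : MvPolynomial (Fin n) K, f.IsHomogeneous d → f ∈ J) :
    ∃ w : Fin n → K, w ≠ 0 ∧ ∀ g ∈ J, eval w g = 0 := by
  classical
  by_contra hcon
  push_neg at hcon
  apply hJ
  have hXi : ∀ i : Fin n, ∃ k : ℕ, (X i : MvPolynomial (Fin n) K) ^ k ∈ J := by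
    intro i
    have hXr : (X i : MvPolynomial (Fin n) K) ∈ vanishingIdeal K (zeroLocus K J) := by
      rw [mem_vanishingIdeal_iff]
      intro x hx
      rcases eq_or_ne x 0 with rfl | hne
      · simp
      · obtain ⟨g, hg, hg0⟩ := hcon x hne
        exact absurd ((mem_zeroLocus_iff).1 hx g hg) hg0
    rw [vanishingIdeal_zeroLocus_eq_radical] at hXr
    exact hXr
  choose k hk using hXi
  refine ⟨∑ i, k i + 1, fun f hf => ?_⟩
  have hfs : f = ∑ a ∈ f.support, monomial a (coeff a f) := as_sum f
  rw [hfs]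
  apply Ideal.sum_mem
  intro a ha
  have hdeg : a.degree = ∑ i, k i + 1 := by
    by_contra hne
    exact (mem_support_iff.1 ha) (hf.coeff_eq_zero hne)
  have hex : ∃ i, k i ≤ a i := by
    by_contra h
    push_neg at h
    have h2 : Finsupp.degree a ≤ ∑ i : Fin n, a i :=
      Finset.sum_le_sum_of_subset (Finset.subset_univ _)
    rcases isEmpty_or_nonempty (Fin n) with he | hne
    · have e1 : (∑ i : Fin n, a i) = 0 := by simp
      have e2 : (∑ i : Fin n, k i) = 0 := by simp
      omega
    · have h3 : (∑ i : Fin n, a i) < ∑ i : Fin n, k i :=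
        Finset.sum_lt_sum_of_nonempty Finset.univ_nonempty fun i _ => h i
      omega
  obtain ⟨i, hi⟩ := hex
  have heq : monomial a (coeff a f) =
      monomial (a - Finsupp.single i (k i)) (coeff a f) * (X i ^ k i) := by
    have hexp : (a - Finsupp.single i (k i)) + Finsupp.single i (k i) = a := by
      ext j
      rcases eq_or_ne j i with rfl | hji
      · simp only [Finsupp.add_apply, Finsupp.tsub_apply, Finsupp.single_eq_same]
        omega
      · simp [Finsupp.single_eq_of_ne' (Ne.symm hji)]
    rw [X_pow_eq_monomial, monomial_mul, mul_one, hexp]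
  rw [heq]
  exact Ideal.mul_mem_left _ _ (hk i)

/- membership in the projective zero set -/

lemma mem_projZerosBar_mk {K : Type*} [Field K] {n m : ℕ}
    (F : Fin m → MvPolynomial (Fin n) K)
    (v : Fin (n+1) → AlgebraicClosure K) (hv : v ≠ 0)
    (h : ∀ i, eval v (map (algebraMap K (AlgebraicClosure K)) (homogPoly (F i))) = 0) :
    Projectivization.mk (AlgebraicClosure K) v hv ∈
      projZerosBar (Ideal.span (homogPoly '' Set.range F)) := by
  intro f hf
  set p := Projectivization.mk (AlgebraicClosure K) v hv with hp
  obtain ⟨a, ha⟩ :=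
    (Projectivization.mk_eq_mk_iff (AlgebraicClosure K) p.rep v p.rep_nonzero hv).1
      (Projectivization.mk_rep p)
  refine span_eval_zero_map _ _ _ ?_ f hf
  rintro _ ⟨g0, ⟨i, rfl⟩, rfl⟩
  rw [← ha, Units.smul_def,
    IsHomog.eval_smul ((homogPoly_isHomogeneous (F i)).map _), h i, mul_zero]

lemma renameTop_mem {K : Type*} [Field K] {n m : ℕ} (F : Fin m → MvPolynomial (Fin n) K) :
    ∀ g ∈ Ideal.span (topComp '' Set.range F),
      (rename Fin.succ) g ∈ Ideal.span (homogPoly '' Set.range F) ⊔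
        Ideal.span {(X 0 : MvPolynomial (Fin (n+1)) K)} := by
  intro g hg
  have hle : Ideal.span (topComp '' Set.range F) ≤
      Ideal.comap ((rename (Fin.succ)).toRingHom : MvPolynomial (Fin n) K →+* _)
        (Ideal.span (homogPoly '' Set.range F) ⊔ Ideal.span {X 0}) := by
    apply Ideal.span_le.2
    rintro _ ⟨f0, ⟨i, rfl⟩, rfl⟩
    rw [SetLike.mem_coe, Ideal.mem_comap]
    show (rename Fin.succ) (topComp (F i)) ∈ _
    obtain ⟨r, hr⟩ := homogPoly_decomp (F i)
    have h1 : (rename Fin.succ) (topComp (F i)) = homogPoly (F i) - X 0 * r := by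
      rw [hr]; ring
    rw [h1]
    refine Ideal.sub_mem _ ?_ ?_
    · exact Ideal.mem_sup_left (Ideal.subset_span ⟨F i, ⟨i, rfl⟩, rfl⟩)
    · exact Ideal.mem_sup_right (Ideal.mul_mem_right _ _ (Ideal.subset_span rfl))
  exact hle hg

lemma dir_mpr {K : Type*} [Field K] [IsAlgClosed K] {n m : ℕ}
    (F : Fin m → MvPolynomial (Fin n) K)
    (hdim : ringKrullDim (MvPolynomial (Fin n) K ⧸ Ideal.span (Set.range F)) = 0)
    (hRHS : ∃ d : ℕ, ∀ f : MvPolynomial (Fin n) K, f.IsHomogeneous d →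
        f ∈ Ideal.span (topComp '' Set.range F)) :
    GenCoords (0 : Fin (n + 1)) (Ideal.span (homogPoly '' Set.range F)) := by
  classical
  obtain ⟨d, hd⟩ := hRHS
  set Kb := AlgebraicClosure K with hKb
  let φ : K →+* Kb := algebraMap K Kb
  have hφs : Function.Surjective φ := IsAlgClosed.algebraMap_bijective_of_isIntegral.2
  let e : K ≃+* Kb := RingEquiv.ofBijective φ ⟨φ.injective, hφs⟩
  have he : ∀ x : K, e x = φ x := fun x => rfl
  have heφ : ∀ x : Kb, φ (e.symm x) = x := fun x => e.apply_symm_apply x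
  set I := Ideal.span (homogPoly '' Set.range F) with hI
  set J := Ideal.span (topComp '' Set.range F) with hJ
  have hJI := renameTop_mem F
  constructor
  · -- finiteness of the projective zero locus
    set S := projZerosBar I with hS
    have hzfin := zerosFinite F hdim
    -- every projective zero has nonzero first coordinate
    have hrep0 : ∀ s ∈ S, Projectivization.rep s 0 ≠ 0 := by
      intro s hs h0
      set u : Fin (n+1) → K := fun j => e.symm (Projectivization.rep s j) with hu
      have huφ : (fun j => φ (u j)) = Projectivization.rep s := funext fun j => heφ _
      have hgen : ∀ i, eval u (homogPoly (F i)) = 0 := by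
        intro i
        have h1 := hs (homogPoly (F i)) (Ideal.subset_span ⟨F i, ⟨i, rfl⟩, rfl⟩)
        have h2 := eval_map_comp φ u (homogPoly (F i))
        rw [huφ, h1] at h2
        exact φ.injective (by rw [← h2, map_zero])
      have hu0 : u 0 = 0 := by
        rw [hu]
        show e.symm _ = 0
        rw [h0, map_zero]
      have hcu : Fin.cons (0:K) (Fin.tail u) = u := by
        rw [← hu0]
        exact Fin.cons_self_tail u
      have htopgen : ∀ i, eval (Fin.tail u) (topComp (F i)) = 0 := by
        intro i
        rw [← eval_cons_zero_homogPoly, hcu]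
        exact hgen i
      have htop : ∀ g ∈ J, eval (Fin.tail u) g = 0 := by
        apply span_eval_zero
        rintro _ ⟨f0, ⟨i, rfl⟩, rfl⟩
        exact htopgen i
      have hXd : ∀ j : Fin n, (Fin.tail u j) ^ d = 0 := by
        intro j
        have hh : ((X j : MvPolynomial (Fin n) K) ^ d).IsHomogeneous d := by
          simpa using (isHomogeneous_X K j).pow d
        have := htop _ (hd _ hh)
        rwa [map_pow, eval_X] at this
      have htail0 : ∀ j, Fin.tail u j = 0 := by
        intro j
        rcases Nat.eq_zero_or_pos d with hd0 | hdpos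
        · exfalso
          have := hXd j
          rw [hd0, pow_zero] at this
          exact one_ne_zero this
        · exact (pow_eq_zero_iff (by omega)).1 (hXd j)
      have hu_zero : u = 0 := by
        rw [← hcu]
        funext j
        induction j using Fin.cases with
        | zero => simp
        | succ j' => simp [Fin.cons_succ, htail0 j']
      apply Projectivization.rep_nonzero s
      funext j
      rw [← heφ (Projectivization.rep s j)]
      show φ (u j) = 0
      rw [hu_zero]
      simp
    -- the injection into the affine zero set
    set aff : Projectivization Kb (Fin (n+1) → Kb) → (Fin n → K) := fun s j =>
      e.symm ((Projectivization.rep s 0)⁻¹ * Projectivization.rep s j.succ) with haff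
    have haff_mem : ∀ s ∈ S, aff s ∈ {a : Fin n → K | ∀ i, eval a (F i) = 0} := by
      intro s hs
      set u : Fin (n+1) → K := fun j => e.symm (Projectivization.rep s j) with hu
      have huφ : (fun j => φ (u j)) = Projectivization.rep s := funext fun j => heφ _
      have hu0 : u 0 ≠ 0 := by
        intro hcon
        apply hrep0 s hs
        rw [← heφ (Projectivization.rep s 0)]
        show φ (u 0) = 0
        rw [hcon, map_zero]
      have hgen : ∀ i, eval u (homogPoly (F i)) = 0 := by
        intro i
        have h1 := hs (homogPoly (F i)) (Ideal.subset_span ⟨F i, ⟨i, rfl⟩, rfl⟩)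
        have h2 := eval_map_comp φ u (homogPoly (F i))
        rw [huφ, h1] at h2
        exact φ.injective (by rw [← h2, map_zero])
      intro i
      have hsc := IsHomog.eval_smul (homogPoly_isHomogeneous (F i)) ((u 0)⁻¹) u
      rw [hgen i, mul_zero] at hsc
      have hform : (u 0)⁻¹ • u = Fin.cons (1:K) (fun j => (u 0)⁻¹ * u j.succ) := by
        funext j
        induction j using Fin.cases with
        | zero => simp [Pi.smul_apply, smul_eq_mul, inv_mul_cancel₀ hu0]
        | succ j' => simp [Pi.smul_apply, smul_eq_mul, Fin.cons_succ]
      rw [hform, eval_cons_one_homogPoly] at hsc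
      have haffeq : aff s = fun j => (u 0)⁻¹ * u j.succ := by
        funext j
        show e.symm _ = _
        rw [map_mul, map_inv₀]
      rw [haffeq]
      exact hsc
    have haffinj : Set.InjOn aff S := by
      intro s hs s' hs' heq
      have h0 : Projectivization.rep s 0 ≠ 0 := hrep0 s hs
      have h0' : Projectivization.rep s' 0 ≠ 0 := hrep0 s' hs'
      have hj : ∀ j : Fin n,
          (Projectivization.rep s 0)⁻¹ * Projectivization.rep s j.succ =
          (Projectivization.rep s' 0)⁻¹ * Projectivization.rep s' j.succ := by
        intro j
        have := congrFun heq j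
        exact e.symm.injective this
      set c : Kb := Projectivization.rep s 0 * (Projectivization.rep s' 0)⁻¹ with hc
      have hcs : c • Projectivization.rep s' = Projectivization.rep s := by
        funext j
        induction j using Fin.cases with
        | zero =>
          show c * _ = _
          rw [hc, mul_assoc, inv_mul_cancel₀ h0', mul_one]
        | succ j' =>
          show c * _ = _
          rw [hc, mul_assoc, ← hj j', ← mul_assoc, mul_inv_cancel₀ h0, one_mul]
      have : Projectivization.mk Kb (Projectivization.rep s) (Projectivization.rep_nonzero s) =
          Projectivization.mk Kb (Projectivization.rep s') (Projectivization.rep_nonzero s') :=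
        (Projectivization.mk_eq_mk_iff' Kb (Projectivization.rep s) (Projectivization.rep s') (Projectivization.rep_nonzero s) (Projectivization.rep_nonzero s')).2 ⟨c, hcs⟩
      rwa [Projectivization.mk_rep, Projectivization.mk_rep] at this
    refine Set.Finite.of_finite_image (hzfin.subset ?_) haffinj
    rintro _ ⟨s, hs, rfl⟩
    exact haff_mem s hs
  · -- the nonzerodivisor property
    right
    intro f hf
    rw [mem_maxSat] at hf ⊢
    obtain ⟨k, hk⟩ := hf
    refine ⟨d * (k+1), fun g hg => ?_⟩
    have hg2 := powLadder I J hJI hd (k+1) hg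
    obtain ⟨y, hy, z, hz, rfl⟩ := Submodule.mem_sup.1 hg2
    obtain ⟨ρ, rfl⟩ := Ideal.mem_span_singleton'.1 hz
    have hrw : f * (y + ρ * X 0 ^ (k+1)) = f * y + (X 0 * f) * (X 0 ^ k * ρ) := by ring
    rw [hrw]
    refine I.add_mem (I.mul_mem_left f hy) ?_
    apply hk
    have hX0 : (X 0 : MvPolynomial (Fin (n+1)) K) ∈
        Ideal.span (Set.range (X : Fin (n+1) → MvPolynomial (Fin (n+1)) K)) :=
      Ideal.subset_span (Set.mem_range_self 0)
    exact Ideal.mul_mem_right ρ _ (Ideal.pow_mem_pow hX0 k)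

lemma dir_mp {K : Type*} [Field K] [IsAlgClosed K] {n m : ℕ}
    (F : Fin m → MvPolynomial (Fin n) K)
    (hGC : GenCoords (0 : Fin (n + 1)) (Ideal.span (homogPoly '' Set.range F))) :
    ∃ d : ℕ, ∀ f : MvPolynomial (Fin n) K, f.IsHomogeneous d →
      f ∈ Ideal.span (topComp '' Set.range F) := by
  classical
  set Kb := AlgebraicClosure K with hKb
  let φ : K →+* Kb := algebraMap K Kb
  have hφs : Function.Surjective φ := IsAlgClosed.algebraMap_bijective_of_isIntegral.2
  let e : K ≃+* Kb := RingEquiv.ofBijective φ ⟨φ.injective, hφs⟩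
  have heφ : ∀ x : Kb, φ (e.symm x) = x := fun x => e.apply_symm_apply x
  set I := Ideal.span (homogPoly '' Set.range F) with hI
  set J := Ideal.span (topComp '' Set.range F) with hJ
  obtain ⟨hfin, hdisj⟩ := hGC
  by_contra hR
  obtain ⟨w, hw0, hwz⟩ := exists_nonzero_zero_of_not_rhs J hR
  -- the point at infinity
  set v0 : Fin (n+1) → Kb := fun j => φ ((Fin.cons (0:K) w : Fin (n+1) → K) j) with hv0def
  have hv0 : v0 ≠ 0 := by
    obtain ⟨j, hj⟩ := Function.ne_iff.1 hw0
    intro hcon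
    apply hj
    have h1 := congrFun hcon j.succ
    rw [hv0def] at h1
    simp only [Fin.cons_succ, Pi.zero_apply] at h1
    exact (map_eq_zero φ).1 h1
  have hgen0 : ∀ i, eval v0 (map φ (homogPoly (F i))) = 0 := by
    intro i
    have h2 := eval_map_comp φ (Fin.cons (0:K) w) (homogPoly (F i))
    rw [eval_cons_zero_homogPoly] at h2
    rw [hwz _ (Ideal.subset_span ⟨F i, ⟨i, rfl⟩, rfl⟩), map_zero] at h2
    exact h2
  set p := Projectivization.mk Kb v0 hv0 with hpdef
  have hpS : p ∈ projZerosBar I := mem_projZerosBar_mk F v0 hv0 hgen0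
  rcases hdisj with hempty | hnzd
  · rw [hempty] at hpS
    exact hpS
  -- construct the separating polynomial
  set T := hfin.toFinset.erase p with hT
  have hlam : ∀ s ∈ T, ∃ lam : MvPolynomial (Fin (n+1)) K,
      lam.IsHomogeneous 1 ∧ eval (Projectivization.rep s) (map φ lam) = 0 ∧
        eval (Projectivization.rep p) (map φ lam) ≠ 0 := by
    intro s hs
    obtain ⟨hsp, hsS⟩ := Finset.mem_erase.1 hs
    obtain ⟨i, hi⟩ := Function.ne_iff.1 (Projectivization.rep_nonzero s)
    have hex : ∃ j, Projectivization.rep s i * Projectivization.rep p j -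
        Projectivization.rep s j * Projectivization.rep p i ≠ 0 := by
      by_contra hcon
      push_neg at hcon
      have hc : ∀ j, Projectivization.rep p j =
          (Projectivization.rep p i * (Projectivization.rep s i)⁻¹) *
            Projectivization.rep s j := by
        intro j
        have h1 := sub_eq_zero.1 (hcon j)
        have hsi : Projectivization.rep s i ≠ 0 := by simpa using hi
        calc Projectivization.rep p j
            = (Projectivization.rep s i)⁻¹ *
              (Projectivization.rep s i * Projectivization.rep p j) := by
              rw [← mul_assoc, inv_mul_cancel₀ hsi, one_mul]
          _ = (Projectivization.rep s i)⁻¹ *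
              (Projectivization.rep s j * Projectivization.rep p i) := by rw [h1]
          _ = Projectivization.rep p i * (Projectivization.rep s i)⁻¹ *
              Projectivization.rep s j := by ring
      have hps : p = s := by
        have h2 : Projectivization.mk Kb (Projectivization.rep p)
              (Projectivization.rep_nonzero p) =
            Projectivization.mk Kb (Projectivization.rep s)
              (Projectivization.rep_nonzero s) :=
          (Projectivization.mk_eq_mk_iff' Kb _ _ _ _).2
            ⟨Projectivization.rep p i * (Projectivization.rep s i)⁻¹,
             funext fun j => (hc j).symm⟩
        rwa [Projectivization.mk_rep, Projectivization.mk_rep] at h2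
      exact hsp hps.symm
    obtain ⟨j, hj⟩ := hex
    refine ⟨C (e.symm (Projectivization.rep s i)) * X j -
      C (e.symm (Projectivization.rep s j)) * X i, ?_, ?_, ?_⟩
    · exact ((isHomogeneous_X K j).C_mul _).sub ((isHomogeneous_X K i).C_mul _)
    · simp only [map_sub, map_mul, map_C, map_X, eval_sub, eval_mul, eval_C, eval_X, heφ]
      ring
    · simp only [map_sub, map_mul, map_C, map_X, eval_sub, eval_mul, eval_C, eval_X, heφ]
      exact hj
  choose lam hlam1 hlam2 hlam3 using hlam
  set f : MvPolynomial (Fin (n+1)) K := ∏ s ∈ T.attach, lam s.1 s.2 with hf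
  have hfP : eval (Projectivization.rep p) (map φ f) ≠ 0 := by
    rw [hf, map_prod, map_prod]
    exact Finset.prod_ne_zero_iff.2 fun s _ => hlam3 s.1 s.2
  -- X 0 * f vanishes on the affine zero locus of I
  have hrad : (X 0 * f) ∈ I.radical := by
    rw [← vanishingIdeal_zeroLocus_eq_radical (K := K) I, mem_vanishingIdeal_iff]
    intro v hv
    show eval v (X 0 * f) = 0
    rcases eq_or_ne v 0 with rfl | hvne
    · simp
    · have hvKb : (fun j => φ (v j)) ≠ 0 := by
        intro hcon
        exact hvne (funext fun j => (map_eq_zero φ).1 (congrFun hcon j))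
      have hqz : ∀ i, eval (fun j => φ (v j)) (map φ (homogPoly (F i))) = 0 := by
        intro i
        rw [eval_map_comp φ]
        rw [show eval v (homogPoly (F i)) = 0 from (mem_zeroLocus_iff).1 hv _ (Ideal.subset_span ⟨F i, ⟨i, rfl⟩, rfl⟩), map_zero]
      have hq : Projectivization.mk Kb (fun j => φ (v j)) hvKb ∈ projZerosBar I :=
        mem_projZerosBar_mk F _ hvKb hqz
      set q := Projectivization.mk Kb (fun j => φ (v j)) hvKb with hqdef
      rcases eq_or_ne q p with hqp | hqp
      · -- v 0 = 0
        obtain ⟨b, hb⟩ := (Projectivization.mk_eq_mk_iff Kb _ v0 hvKb hv0).1 (by rw [← hpdef, ← hqp])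
        have h1 := congrFun hb 0
        have h2 : v0 0 = 0 := by
          rw [hv0def]
          simp
        rw [Units.smul_def, Pi.smul_apply, smul_eq_mul, h2, mul_zero] at h1
        have hv00 : v 0 = 0 := (map_eq_zero φ).1 h1.symm
        rw [map_mul, eval_X, hv00, zero_mul]
      · have hqT : q ∈ T := Finset.mem_erase.2 ⟨hqp, hfin.mem_toFinset.2 hq⟩
        obtain ⟨a, ha⟩ := (Projectivization.mk_eq_mk_iff Kb (Projectivization.rep q) _
          (Projectivization.rep_nonzero q) hvKb).1 (Projectivization.mk_rep q)
        have hfac : eval (fun j => φ (v j)) (map φ (lam q hqT)) = 0 := by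
          have hhom := (hlam1 q hqT).map φ
          have h3 := hlam2 q hqT
          rw [← ha, Units.smul_def, IsHomog.eval_smul hhom] at h3
          rcases mul_eq_zero.1 h3 with h4 | h4
          · exact absurd h4 (pow_ne_zero 1 a.ne_zero)
          · exact h4
        have hlam0 : eval v (lam q hqT) = 0 := by
          have h5 := eval_map_comp φ v (lam q hqT)
          rw [hfac] at h5
          exact φ.injective (by rw [← h5, map_zero])
        have hf0 : eval v f = 0 := by
          rw [hf, map_prod]
          exact Finset.prod_eq_zero (Finset.mem_attach T ⟨q, hqT⟩) hlam0
        rw [map_mul, hf0, mul_zero]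
  obtain ⟨N, hN⟩ := hrad
  -- strip the powers of X 0 using the nonzerodivisor hypothesis
  have hstep : ∀ t : ℕ, (X 0 : MvPolynomial (Fin (n+1)) K) ^ t * f ^ N ∈ maxSat I →
      f ^ N ∈ maxSat I := by
    intro t
    induction t with
    | zero => intro h; rwa [pow_zero, one_mul] at h
    | succ t ih =>
      intro h
      apply ih
      apply hnzd
      have : (X 0 : MvPolynomial (Fin (n+1)) K) * ((X 0) ^ t * f ^ N) =
          (X 0) ^ (t+1) * f ^ N := by ring
      rw [this]
      exact h
  have hfN : f ^ N ∈ maxSat I := by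
    apply hstep N
    rw [← mul_pow]
    exact le_maxSat hN
  -- evaluation at the point at infinity kills the saturation
  set q0 : Fin (n+1) → K := fun j => e.symm (Projectivization.rep p j) with hq0def
  have hq0 : (fun j => φ (q0 j)) = Projectivization.rep p := funext fun j => heφ _
  have hIq0 : ∀ g ∈ I, eval q0 g = 0 := by
    intro g hg
    have h1 := hpS g hg
    have h2 := eval_map_comp φ q0 g
    rw [hq0, h1] at h2
    exact φ.injective (by rw [← h2, map_zero])
  obtain ⟨jx, hjx⟩ := Function.ne_iff.1 (Projectivization.rep_nonzero p)
  have hq0j : q0 jx ≠ 0 := by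
    intro hcon
    apply hjx
    rw [← heφ (Projectivization.rep p jx)]
    show φ (q0 jx) = 0
    rw [hcon, map_zero]
  have hsat0 : ∀ g ∈ maxSat I, eval q0 g = 0 := by
    intro g hg
    obtain ⟨k, hk⟩ := mem_maxSat.1 hg
    have hXk : (X jx : MvPolynomial (Fin (n+1)) K) ^ k ∈
        (Ideal.span (Set.range (X : Fin (n+1) → MvPolynomial (Fin (n+1)) K))) ^ k :=
      Ideal.pow_mem_pow (Ideal.subset_span (Set.mem_range_self jx)) k
    have h6 := hIq0 _ (hk _ hXk)
    rw [map_mul, map_pow, eval_X] at h6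
    exact (mul_eq_zero.1 h6).resolve_right (pow_ne_zero k hq0j)
  have hfq0 : eval q0 (f ^ N) ≠ 0 := by
    rw [map_pow]
    apply pow_ne_zero
    intro hcon
    apply hfP
    have h7 := eval_map_comp φ q0 f
    rw [hq0, hcon, map_zero] at h7
    exact h7
  exact hfq0 (hsat0 _ hfN)

end Stmt4Aux


/-- For an algebraically closed field `K` and a polynomial system `F` with
`(F) ≠ (1)` zero-dimensional, `(F^h)` is in generic coordinates iff the degree of regularity
is finite, i.e. iff some degree-`d` part of the polynomial ring is contained in `(F^top)`. -/
theorem stmt_4 {K : Type*} [Field K] [IsAlgClosed K] {n m : ℕ}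
    (F : Fin m → MvPolynomial (Fin n) K)
    (hne : Ideal.span (Set.range F) ≠ ⊤)
    (hdim : ringKrullDim (MvPolynomial (Fin n) K ⧸ Ideal.span (Set.range F)) = 0) :
    GenCoords (0 : Fin (n + 1)) (Ideal.span (homogPoly '' Set.range F)) ↔
      ∃ d : ℕ, ∀ f : MvPolynomial (Fin n) K, f.IsHomogeneous d →
        f ∈ Ideal.span (topComp '' Set.range F) :=
  ⟨fun h => dir_mp F h, fun h => dir_mpr F hdim h⟩
end

section
/- Let K be an algebraically closed field and let F = {f_1,…,f_m} ⊆ K[x_1,…,x_n] be an inhomogeneous polynomial system such that the homogenized ideal (F^h) is in generic coordinates and Z_+(F^h) ≠ ∅. Then for every integer d ≥ sat((F^h)) one has (F)_{≤d} = W_{F,d}, i.e., every element of the ideal (F) of degree at most d admits a representation Σ g_i·f_i with deg(g_i·f_i) ≤ d for all i. Consequently the last fall degree satisfies d_F = sat((F^h)), and in particular every f ∈ (F) with a degree fall in d_f satisfies d_f ≤ sat((F^h)). -/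
open MvPolynomial

namespace S16
open Finsupp

lemma expDeg_eq {σ : Type*} (a : σ →₀ ℕ) : expDeg a = a.degree := rfl

lemma degree_add' {σ : Type*} (a b : σ →₀ ℕ) : (a + b).degree = a.degree + b.degree := by
  simp [Finsupp.degree_eq_weight_one, map_add]

lemma degree_single' {σ : Type*} (i : σ) (k : ℕ) : (Finsupp.single i k).degree = k := by
  simp [Finsupp.degree_eq_weight_one, Finsupp.weight_apply, Finsupp.sum_single_index]

lemma degree_mapDomain' {σ τ : Type*} (f : σ → τ) (a : σ →₀ ℕ) :
    (a.mapDomain f).degree = a.degree := by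
  rw [← expDeg_eq, ← expDeg_eq]
  exact Finsupp.sum_mapDomain_index (fun _ => rfl) (fun _ _ _ => rfl)

variable {K : Type*} [Field K] {q : ℕ}

noncomputable def eAux (d : ℕ) (a : Fin q →₀ ℕ) : Fin (q + 1) →₀ ℕ :=
  Finsupp.single 0 (d - a.degree) + a.mapDomain Fin.succ

lemma degree_eAux {d : ℕ} {a : Fin q →₀ ℕ} (h : a.degree ≤ d) : (eAux d a).degree = d := by
  rw [eAux, degree_add', degree_single', degree_mapDomain']
  omega

noncomputable def phi (d : ℕ) :
    MvPolynomial (Fin q) K →ₗ[K] MvPolynomial (Fin (q + 1)) K :=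
  Finsupp.lsum K (fun a => (monomial (eAux d a) : K →ₗ[K] MvPolynomial (Fin (q + 1)) K)) ∘ₗ
    (AddMonoidAlgebra.coeffLinearEquiv K).toLinearMap

lemma phi_monomial (d : ℕ) (a : Fin q →₀ ℕ) (c : K) :
    phi d (monomial a c) = monomial (eAux d a) c := by
  rw [← single_eq_monomial]
  exact Finsupp.lsum_single K _ a c

lemma phi_apply (d : ℕ) (f : MvPolynomial (Fin q) K) :
    phi d f = ∑ a ∈ f.support, monomial (eAux d a) (coeff a f) := by
  conv_lhs => rw [← support_sum_monomial_coeff f]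
  rw [map_sum]
  simp [phi_monomial]

end S16

namespace S16v2
open Finsupp S16

variable {K : Type*} [Field K] {q : ℕ}

lemma isHomogeneous_phi {d : ℕ} {f : MvPolynomial (Fin q) K} (h : f.totalDegree ≤ d) :
    (phi d f).IsHomogeneous d := by
  rw [phi_apply]
  refine IsHomogeneous.sum _ _ _ fun a ha => isHomogeneous_monomial _ ?_
  refine degree_eAux (le_trans ?_ h)
  exact le_totalDegree ha

lemma homogPoly_eq_phi (f : MvPolynomial (Fin q) K) :
    homogPoly f = phi f.totalDegree f := by
  rw [phi_apply, homogPoly]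
  rfl

lemma eAux_add {d e : ℕ} {a b : Fin q →₀ ℕ} (ha : a.degree ≤ d) (hb : b.degree ≤ e) :
    eAux (d + e) (a + b) = eAux d a + eAux e b := by
  rw [eAux, eAux, eAux, Finsupp.mapDomain_add, degree_add']
  have : d + e - (a.degree + b.degree) = (d - a.degree) + (e - b.degree) := by omega
  rw [this, Finsupp.single_add]
  abel

lemma phi_mul {d e : ℕ} {f g : MvPolynomial (Fin q) K}
    (hf : f.totalDegree ≤ d) (hg : g.totalDegree ≤ e) :
    phi (d + e) (f * g) = phi d f * phi e g := by
  conv_lhs => rw [← support_sum_monomial_coeff f, ← support_sum_monomial_coeff g]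
  rw [phi_apply d f, phi_apply e g, Finset.sum_mul_sum, Finset.sum_mul_sum, map_sum]
  refine Finset.sum_congr rfl fun a ha => ?_
  rw [map_sum]
  refine Finset.sum_congr rfl fun b hb => ?_
  rw [monomial_mul, monomial_mul, phi_monomial,
    eAux_add (le_trans (le_totalDegree ha) hf) (le_trans (le_totalDegree hb) hg)]

lemma eAux_shift {d k : ℕ} {a : Fin q →₀ ℕ} (h : a.degree ≤ d) :
    eAux (d + k) a = Finsupp.single 0 k + eAux d a := by
  rw [eAux, eAux]
  have : d + k - a.degree = k + (d - a.degree) := by omega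
  rw [this, Finsupp.single_add, add_assoc]

lemma phi_shift {d k : ℕ} {f : MvPolynomial (Fin q) K} (h : f.totalDegree ≤ d) :
    phi (d + k) f = X 0 ^ k * phi d f := by
  rw [phi_apply, phi_apply, Finset.mul_sum]
  refine Finset.sum_congr rfl fun a ha => ?_
  rw [X_pow_eq_monomial, monomial_mul, one_mul,
    eAux_shift (le_trans (le_totalDegree ha) h)]

lemma dehom_X_zero : dehomAlg (K := K) q (X 0) = 1 := by
  rw [dehomAlg, aeval_X]
  rfl

lemma dehom_monomial_mapDomain (a : Fin q →₀ ℕ) (c : K) :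
    dehomAlg q (monomial (a.mapDomain Fin.succ) c) = monomial a c := by
  rw [dehomAlg, aeval_monomial,
    Finsupp.prod_mapDomain_index_inj (Fin.succ_injective q)]
  rw [monomial_eq]
  congr 1

lemma dehom_monomial_eAux (d : ℕ) (a : Fin q →₀ ℕ) (c : K) :
    dehomAlg q (monomial (eAux d a) c) = monomial a c := by
  have h1 : monomial (eAux d a) c
      = X 0 ^ (d - a.degree) * monomial (a.mapDomain Fin.succ) c := by
    rw [X_pow_eq_monomial, monomial_mul, one_mul, eAux]
  rw [h1, map_mul, map_pow, dehom_X_zero, one_pow, one_mul, dehom_monomial_mapDomain]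

lemma dehom_phi (d : ℕ) (f : MvPolynomial (Fin q) K) :
    dehomAlg q (phi d f) = f := by
  rw [phi_apply, map_sum]
  conv_rhs => rw [← support_sum_monomial_coeff f]
  exact Finset.sum_congr rfl fun a _ => dehom_monomial_eAux d a (coeff a f)

lemma dehom_homogPoly (f : MvPolynomial (Fin q) K) :
    dehomAlg q (homogPoly f) = f := by
  rw [homogPoly_eq_phi, dehom_phi]

end S16v2

namespace S16v3
open Finsupp S16 S16v2

variable {K : Type*} [Field K] {q : ℕ}

noncomputable def bTail (b : Fin (q + 1) →₀ ℕ) : Fin q →₀ ℕ :=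
  Finsupp.comapDomain Fin.succ b (Fin.succ_injective q).injOn

lemma bTail_decomp (b : Fin (q + 1) →₀ ℕ) :
    Finsupp.single 0 (b 0) + (bTail b).mapDomain Fin.succ = b := by
  ext i
  refine Fin.cases ?_ (fun j => ?_) i
  · rw [Finsupp.add_apply, Finsupp.single_eq_same,
      Finsupp.mapDomain_notin_range _ _ (by simp [Fin.succ_ne_zero])]
    omega
  · rw [Finsupp.add_apply, Finsupp.single_eq_of_ne' (Fin.succ_ne_zero j).symm,
      Finsupp.mapDomain_apply (Fin.succ_injective q)]
    simp [bTail]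

lemma bTail_degree (b : Fin (q + 1) →₀ ℕ) : b 0 + (bTail b).degree = b.degree := by
  conv_rhs => rw [← bTail_decomp b]
  rw [degree_add', degree_single', degree_mapDomain']

lemma eAux_bTail {l : ℕ} {b : Fin (q + 1) →₀ ℕ} (h : b.degree = l) :
    eAux l (bTail b) = b := by
  have h2 := bTail_degree b
  rw [eAux]
  have : l - (bTail b).degree = b 0 := by omega
  rw [this, bTail_decomp]

lemma dehom_monomial_of_degree (l : ℕ) (b : Fin (q + 1) →₀ ℕ) (c : K) (h : b.degree = l) :
    dehomAlg q (monomial b c) = monomial (bTail b) c := by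
  conv_lhs => rw [← eAux_bTail h]
  exact dehom_monomial_eAux l (bTail b) c

lemma phi_dehom {l : ℕ} {f : MvPolynomial (Fin (q + 1)) K} (hf : f.IsHomogeneous l) :
    phi l (dehomAlg q f) = f := by
  conv_lhs => rw [← support_sum_monomial_coeff f]
  conv_rhs => rw [← support_sum_monomial_coeff f]
  rw [map_sum, map_sum]
  refine Finset.sum_congr rfl fun b hb => ?_
  have hd : b.degree = l := by
    rw [Finsupp.degree_eq_weight_one]
    exact hf (MvPolynomial.mem_support_iff.mp hb)
  rw [dehom_monomial_of_degree l b _ hd, phi_monomial, eAux_bTail hd]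

lemma dehom_totalDegree_le {l : ℕ} {f : MvPolynomial (Fin (q + 1)) K}
    (hf : f.IsHomogeneous l) : (dehomAlg q f).totalDegree ≤ l := by
  conv_lhs => rw [← support_sum_monomial_coeff f]
  rw [map_sum]
  refine le_trans (totalDegree_finset_sum _ _) (Finset.sup_le fun b hb => ?_)
  have hd : b.degree = l := by
    rw [Finsupp.degree_eq_weight_one]
    exact hf (MvPolynomial.mem_support_iff.mp hb)
  rw [dehom_monomial_of_degree l b _ hd]
  have h2 : (monomial (bTail b) (coeff b f)).totalDegree ≤ (bTail b).degree := by
    rw [← expDeg_eq]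
    exact totalDegree_monomial_le _ _
  have := bTail_degree b
  omega

end S16v3

namespace S16v4
open Finsupp S16 S16v2 S16v3

variable {K : Type*} [Field K] {σ : Type*}

/-- component of product with a homogeneous polynomial. -/
lemma comp_mul_homog {t : MvPolynomial σ K} {e : ℕ} (ht : t.IsHomogeneous e)
    (p : MvPolynomial σ K) (d : ℕ) :
    homogeneousComponent d (p * t) =
      (if e ≤ d then homogeneousComponent (d - e) p else 0) * t := by
  induction p using MvPolynomial.induction_on' with
  | add p q hp hq =>
    rw [add_mul, map_add, hp, hq, map_add]
    split_ifs <;> ring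
  | monomial a c =>
    have hmt : monomial a c * t ∈ homogeneousSubmodule σ K (a.degree + e) :=
      (mem_homogeneousSubmodule _ _).mpr ((isHomogeneous_monomial c rfl).mul ht)
    have hma : (monomial a c : MvPolynomial σ K) ∈ homogeneousSubmodule σ K a.degree :=
      (mem_homogeneousSubmodule _ _).mpr (isHomogeneous_monomial c rfl)
    rw [homogeneousComponent_of_mem hmt]
    by_cases hle : e ≤ d
    · rw [if_pos hle, homogeneousComponent_of_mem hma]
      by_cases hda : d = a.degree + e
      · rw [if_pos hda, if_pos (by omega)]
      · rw [if_neg hda, if_neg (by omega), zero_mul]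
    · rw [if_neg hle, if_neg (by omega), zero_mul]

/-- components of members of an ideal spanned by homogeneous elements stay in the ideal. -/
lemma comp_mem_span {S : Set (MvPolynomial σ K)}
    (hS : ∀ s ∈ S, ∃ e, s.IsHomogeneous e) {f : MvPolynomial σ K}
    (hf : f ∈ Ideal.span S) (m : ℕ) : homogeneousComponent m f ∈ Ideal.span S := by
  obtain ⟨c, hsupp, rfl⟩ := Submodule.mem_span_set.mp hf
  rw [Finsupp.sum, map_sum]
  refine Ideal.sum_mem _ fun t htm => ?_
  obtain ⟨e, he⟩ := hS t (hsupp htm)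
  rw [smul_eq_mul, comp_mul_homog he]
  exact Ideal.mul_mem_left _ _ (Ideal.subset_span (hsupp htm))

/-- the power of the maximal ideal is spanned by degree-k monomials. -/
lemma Jpow (k : ℕ) :
    (Ideal.span (Set.range (X : σ → MvPolynomial σ K))) ^ k
      = Ideal.span {m | ∃ a : σ →₀ ℕ, a.degree = k ∧ m = monomial a 1} := by
  induction k with
  | zero =>
    rw [pow_zero, Ideal.one_eq_top, eq_comm, Ideal.eq_top_iff_one]
    refine Ideal.subset_span ⟨0, map_zero _, ?_⟩
    rw [monomial_zero', C_1]
  | succ k ih =>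
    rw [pow_succ, ih, Ideal.span_mul_span']
    refine le_antisymm (Ideal.span_le.mpr ?_) (Ideal.span_le.mpr ?_)
    · rintro x ⟨s, ⟨a, ha, rfl⟩, t, ⟨i, rfl⟩, rfl⟩
      have hX : (X i : MvPolynomial σ K) = monomial (Finsupp.single i 1) 1 := by
        rw [← X_pow_eq_monomial, pow_one]
      refine Ideal.subset_span ⟨a + Finsupp.single i 1, ?_, ?_⟩
      · rw [degree_add', ha, degree_single']
      · show monomial a 1 * X i = _
        rw [hX, monomial_mul, mul_one]
    · rintro x ⟨b, hb, rfl⟩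
      have hbne : b ≠ 0 := by
        intro h0
        rw [h0, map_zero] at hb
        omega
      obtain ⟨i, hi⟩ : ∃ i, b i ≠ 0 := by
        by_contra hc
        push_neg at hc
        exact hbne (Finsupp.ext hc)
      have hle : Finsupp.single i 1 ≤ b := Finsupp.single_le_iff.mpr (by omega)
      have hdec : b - Finsupp.single i 1 + Finsupp.single i 1 = b :=
        tsub_add_cancel_of_le hle
      have hdeg : (b - Finsupp.single i 1).degree = k := by
        have := degree_add' (b - Finsupp.single i 1) (Finsupp.single i 1)
        rw [hdec, degree_single', hb] at this
        omega
      have hX : (X i : MvPolynomial σ K) = monomial (Finsupp.single i 1) 1 := by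
        rw [← X_pow_eq_monomial, pow_one]
      have : (monomial b 1 : MvPolynomial σ K)
          = monomial (b - Finsupp.single i 1) 1 * X i := by
        rw [hX, monomial_mul, mul_one, hdec]
      rw [this]
      exact Ideal.subset_span
        (Set.mul_mem_mul ⟨b - Finsupp.single i 1, hdeg, rfl⟩ ⟨i, rfl⟩)

/-- a homogeneous polynomial of degree at least k lies in the k-th power of the maximal
ideal. -/
lemma homog_mem_Jpow {k : ℕ} :
    ∀ {m : ℕ} {p : MvPolynomial σ K}, p.IsHomogeneous m → k ≤ m →
      p ∈ (Ideal.span (Set.range (X : σ → MvPolynomial σ K))) ^ k := by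
  induction k with
  | zero => intro m p _ _; rw [pow_zero, Ideal.one_eq_top]; trivial
  | succ k ih =>
    intro m p hp hk
    rw [pow_succ, ← support_sum_monomial_coeff p]
    refine Ideal.sum_mem _ fun b hb => ?_
    have hbdeg : b.degree = m := by
      rw [Finsupp.degree_eq_weight_one]
      exact hp (MvPolynomial.mem_support_iff.mp hb)
    have hbne : b ≠ 0 := by
      intro h0
      rw [h0, map_zero] at hbdeg
      omega
    obtain ⟨i, hi⟩ : ∃ i, b i ≠ 0 := by
      by_contra hc
      push_neg at hc
      exact hbne (Finsupp.ext hc)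
    have hle : Finsupp.single i 1 ≤ b := Finsupp.single_le_iff.mpr (by omega)
    have hdec : b - Finsupp.single i 1 + Finsupp.single i 1 = b :=
      tsub_add_cancel_of_le hle
    have hdeg : (b - Finsupp.single i 1).degree = m - 1 := by
      have := degree_add' (b - Finsupp.single i 1) (Finsupp.single i 1)
      rw [hdec, degree_single', hbdeg] at this
      omega
    have hX : (X i : MvPolynomial σ K) = monomial (Finsupp.single i 1) 1 := by
      rw [← X_pow_eq_monomial, pow_one]
    have hsplit : (monomial b (coeff b p) : MvPolynomial σ K)
        = monomial (b - Finsupp.single i 1) (coeff b p) * X i := by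
      rw [hX, monomial_mul, mul_one, hdec]
    rw [hsplit]
    exact Ideal.mul_mem_mul
      (ih (isHomogeneous_monomial _ hdeg) (by omega))
      (Ideal.subset_span ⟨i, rfl⟩)

end S16v4

namespace S16v5
open Finsupp S16 S16v2 S16v3 S16v4

variable {K : Type*} [Field K] {σ : Type*}

lemma colon_mono_pow {I : Ideal (MvPolynomial σ K)} :
    Monotone fun k =>
      Submodule.colon I (((Ideal.span (Set.range (X : σ → MvPolynomial σ K))) ^ k : Ideal (MvPolynomial σ K)) : Set (MvPolynomial σ K)) := by
  intro k l hkl f hf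
  rw [Submodule.mem_colon] at hf ⊢
  exact fun p hp => hf p (Ideal.pow_le_pow_right hkl hp)

lemma mem_maxSat_iff {I : Ideal (MvPolynomial σ K)} {f : MvPolynomial σ K} :
    f ∈ maxSat I ↔ ∃ k, f ∈
      Submodule.colon I (((Ideal.span (Set.range (X : σ → MvPolynomial σ K))) ^ k : Ideal (MvPolynomial σ K)) : Set (MvPolynomial σ K)) := by
  rw [maxSat]
  exact Submodule.mem_iSup_of_directed _ colon_mono_pow.directed_le

lemma ideal_le_maxSat (I : Ideal (MvPolynomial σ K)) : I ≤ maxSat I := fun f hf =>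
  mem_maxSat_iff.mpr ⟨0, Submodule.mem_colon.mpr fun p _ => by
    rw [smul_eq_mul]; exact I.mul_mem_right p hf⟩

lemma comp_mem_maxSat {I : Ideal (MvPolynomial σ K)}
    (hI : ∀ f ∈ I, ∀ m, homogeneousComponent m f ∈ I)
    {f : MvPolynomial σ K} (hf : f ∈ maxSat I) (d : ℕ) :
    homogeneousComponent d f ∈ maxSat I := by
  obtain ⟨k, hk⟩ := mem_maxSat_iff.mp hf
  refine mem_maxSat_iff.mpr ⟨k, Submodule.mem_colon.mpr fun t ht => ?_⟩
  rw [smul_eq_mul]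
  rw [Jpow] at ht
  induction ht using Submodule.span_induction with
  | mem x hx =>
    obtain ⟨a, ha, rfl⟩ := hx
    have hxh : (monomial a (1 : K)).IsHomogeneous k := isHomogeneous_monomial 1 ha
    have hc : homogeneousComponent (d + k) (f * monomial a 1)
        = homogeneousComponent d f * monomial a 1 := by
      rw [comp_mul_homog hxh, if_pos (by omega), Nat.add_sub_cancel]
    rw [← hc]
    refine hI _ ?_ _
    have hmem : (monomial a (1 : K)) ∈
        (Ideal.span (Set.range (X : σ → MvPolynomial σ K))) ^ k := by
      rw [Jpow]; exact Ideal.subset_span ⟨a, ha, rfl⟩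
    have := Submodule.mem_colon.mp hk _ hmem
    rwa [smul_eq_mul] at this
  | zero => rw [mul_zero]; exact I.zero_mem
  | add x y hx hy ihx ihy =>
    rw [mul_add]
    exact I.add_mem ihx ihy
  | smul r x hx ihx =>
    rw [smul_eq_mul, ← mul_assoc, mul_comm _ r, mul_assoc]
    exact I.mul_mem_left r ihx

lemma finset_exists_bound {α : Type*} [DecidableEq α] (S : Finset α) (C : ℕ → α → Prop)
    (hmono : ∀ {k l : ℕ}, k ≤ l → ∀ a, C k a → C l a)
    (h : ∀ s ∈ S, ∃ k, C k s) : ∃ k, ∀ s ∈ S, C k s := by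
  induction S using Finset.induction with
  | empty => exact ⟨0, by simp⟩
  | @insert a T ha ih =>
    obtain ⟨k1, hk1⟩ := ih fun s hs => h s (Finset.mem_insert_of_mem hs)
    obtain ⟨k2, hk2⟩ := h a (Finset.mem_insert_self a T)
    refine ⟨max k1 k2, fun s hs => ?_⟩
    rcases Finset.mem_insert.mp hs with rfl | hs
    · exact hmono (le_max_right _ _) _ hk2
    · exact hmono (le_max_left _ _) _ (hk1 s hs)

lemma maxSat_eq_colon [Fintype σ] (I : Ideal (MvPolynomial σ K)) :
    ∃ k0, maxSat I
      = Submodule.colon I (((Ideal.span (Set.range (X : σ → MvPolynomial σ K))) ^ k0 : Ideal (MvPolynomial σ K)) : Set (MvPolynomial σ K)) := by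
  classical
  have hN : IsNoetherian (MvPolynomial σ K) (MvPolynomial σ K) :=
    isNoetherianRing_iff.mp inferInstance
  obtain ⟨S, hSpan⟩ := IsNoetherian.noetherian (maxSat I)
  obtain ⟨k0, hk0⟩ := finset_exists_bound S
    (fun k s => s ∈ Submodule.colon I
      (((Ideal.span (Set.range (X : σ → MvPolynomial σ K))) ^ k : Ideal (MvPolynomial σ K)) : Set (MvPolynomial σ K)))
    (fun hkl a hak => colon_mono_pow hkl hak)
    (fun s hs => mem_maxSat_iff.mp (hSpan ▸ Submodule.subset_span hs))
  refine ⟨k0, le_antisymm ?_ ?_⟩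
  · rw [← hSpan]
    exact Submodule.span_le.mpr hk0
  · exact le_iSup (fun k => Submodule.colon I
      (((Ideal.span (Set.range (X : σ → MvPolynomial σ K))) ^ k : Ideal (MvPolynomial σ K)) : Set (MvPolynomial σ K))) k0

lemma exists_sat_bound [Fintype σ] {I : Ideal (MvPolynomial σ K)}
    (hI : ∀ f ∈ I, ∀ m, homogeneousComponent m f ∈ I) :
    ∃ s0 : ℕ, ∀ l, s0 ≤ l → ∀ f : MvPolynomial σ K, f.IsHomogeneous l →
      f ∈ maxSat I → f ∈ I := by
  classical
  have hN : IsNoetherian (MvPolynomial σ K) (MvPolynomial σ K) :=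
    isNoetherianRing_iff.mp inferInstance
  obtain ⟨k0, hk0⟩ := maxSat_eq_colon I
  obtain ⟨S, hSpan⟩ := IsNoetherian.noetherian (maxSat I)
  refine ⟨k0 + (S.sup fun s => s.totalDegree) + 1, fun l hl f hf hfsat => ?_⟩
  rw [← hSpan] at hfsat
  obtain ⟨p, -, hp⟩ := Submodule.mem_span_finset.mp hfsat
  have hfc : f = homogeneousComponent l f := by
    rw [homogeneousComponent_of_mem ((mem_homogeneousSubmodule _ _).mpr hf), if_pos rfl]
  rw [hfc, ← hp, map_sum]
  refine Ideal.sum_mem _ fun s hs => ?_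
  have hsmem : s ∈ maxSat I := hSpan ▸ Submodule.subset_span hs
  have hdec : (p s • s : MvPolynomial σ K)
      = ∑ m ∈ Finset.range (s.totalDegree + 1), p s * homogeneousComponent m s := by
    rw [smul_eq_mul, ← Finset.mul_sum, sum_homogeneousComponent]
  rw [hdec, map_sum]
  refine Ideal.sum_mem _ fun m hm => ?_
  rw [comp_mul_homog (homogeneousComponent_isHomogeneous m s)]
  by_cases hml : m ≤ l
  · rw [if_pos hml]
    have hmS : m ≤ S.sup fun s => s.totalDegree := by
      have h1 : m ≤ s.totalDegree := Nat.lt_succ_iff.mp (Finset.mem_range.mp hm)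
      exact le_trans h1 (Finset.le_sup hs)
    have h1 : homogeneousComponent (l - m) (p s)
        ∈ (Ideal.span (Set.range (X : σ → MvPolynomial σ K))) ^ k0 :=
      homog_mem_Jpow (homogeneousComponent_isHomogeneous _ _) (by omega)
    have h2 : homogeneousComponent m s ∈ Submodule.colon I
        (((Ideal.span (Set.range (X : σ → MvPolynomial σ K))) ^ k0 : Ideal (MvPolynomial σ K)) : Set (MvPolynomial σ K)) := by
      rw [← hk0]
      exact comp_mem_maxSat hI hsmem m
    have h3 := Submodule.mem_colon.mp h2 _ h1
    rwa [smul_eq_mul, mul_comm] at h3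
  · rw [if_neg hml, zero_mul]
    exact I.zero_mem

lemma top_ne_zero {p : MvPolynomial σ K} (hp : p ≠ 0) :
    homogeneousComponent p.totalDegree p ≠ 0 := by
  obtain ⟨b, hb, htd⟩ := Finset.exists_mem_eq_sup p.support
    (support_nonempty.mpr hp) fun m => m.sum fun _ e => e
  intro h0
  have hcb : coeff b (homogeneousComponent p.totalDegree p) = coeff b p := by
    rw [coeff_homogeneousComponent, if_pos]
    rw [totalDegree, htd]
    rfl
  rw [h0, coeff_zero] at hcb
  exact MvPolynomial.mem_support_iff.mp hb hcb.symm

lemma comp_top_mul (p q : MvPolynomial σ K) :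
    homogeneousComponent (p.totalDegree + q.totalDegree) (p * q)
      = homogeneousComponent p.totalDegree p * homogeneousComponent q.totalDegree q := by
  have hrep : p * q = ∑ i ∈ Finset.range (p.totalDegree + 1),
      ∑ j ∈ Finset.range (q.totalDegree + 1),
        homogeneousComponent i p * homogeneousComponent j q := by
    rw [← Finset.sum_mul_sum, sum_homogeneousComponent, sum_homogeneousComponent]
  rw [hrep, map_sum]
  rw [Finset.sum_eq_single p.totalDegree]
  · rw [map_sum, Finset.sum_eq_single q.totalDegree]
    · rw [homogeneousComponent_of_mem ((mem_homogeneousSubmodule _ _).mpr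
        ((homogeneousComponent_isHomogeneous p.totalDegree p).mul
          (homogeneousComponent_isHomogeneous q.totalDegree q))), if_pos rfl]
    · intro j hj hjne
      rw [homogeneousComponent_of_mem ((mem_homogeneousSubmodule _ _).mpr
        ((homogeneousComponent_isHomogeneous p.totalDegree p).mul
          (homogeneousComponent_isHomogeneous j q))), if_neg (by omega)]
    · intro h
      exact absurd (Finset.self_mem_range_succ q.totalDegree) h
  · intro i hi hine
    rw [map_sum]
    refine Finset.sum_eq_zero fun j hj => ?_
    have hi' := Finset.mem_range.mp hi
    have hj' := Finset.mem_range.mp hj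
    rw [homogeneousComponent_of_mem ((mem_homogeneousSubmodule _ _).mpr
      ((homogeneousComponent_isHomogeneous i p).mul
        (homogeneousComponent_isHomogeneous j q))), if_neg (by omega)]
  · intro h
    exact absurd (Finset.self_mem_range_succ p.totalDegree) h

lemma totalDegree_mul_eq {p q : MvPolynomial σ K} (hp : p ≠ 0) (hq : q ≠ 0) :
    (p * q).totalDegree = p.totalDegree + q.totalDegree := by
  refine le_antisymm (totalDegree_mul p q) ?_
  by_contra hlt
  push_neg at hlt
  have h0 : homogeneousComponent (p.totalDegree + q.totalDegree) (p * q) = 0 :=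
    homogeneousComponent_eq_zero _ _ hlt
  rw [comp_top_mul] at h0
  exact mul_ne_zero (top_ne_zero hp) (top_ne_zero hq) h0

end S16v5

namespace S16main
open Finsupp S16 S16v2 S16v3 S16v4 S16v5

variable {K : Type*} [Field K] {nv mI : ℕ} (F : Fin mI → MvPolynomial (Fin nv) K)

local notation "Ih" => Ideal.span (homogPoly '' Set.range (F))

lemma homogPoly_isHom (f : MvPolynomial (Fin nv) K) :
    (homogPoly f).IsHomogeneous f.totalDegree := by
  rw [homogPoly_eq_phi]
  exact isHomogeneous_phi le_rfl

lemma hIh_span : (Ih) = Ideal.span (Set.range fun i => homogPoly (F i)) := by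
  rw [← Set.range_comp]
  rfl

lemma hIcomp : ∀ f ∈ (Ih), ∀ m, homogeneousComponent m f ∈ (Ih) := by
  intro f hf m
  refine comp_mem_span ?_ hf m
  rintro s ⟨g, -, rfl⟩
  exact ⟨g.totalDegree, homogPoly_isHom g⟩

lemma nzd_pow (hnzd : ∀ f, X 0 * f ∈ maxSat (Ih) → f ∈ maxSat (Ih)) :
    ∀ (k : ℕ) (f : MvPolynomial (Fin (nv + 1)) K),
      X 0 ^ k * f ∈ maxSat (Ih) → f ∈ maxSat (Ih) := by
  intro k
  induction k with
  | zero => intro f hf; rwa [pow_zero, one_mul] at hf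
  | succ k ih =>
    intro f hf
    refine ih _ (hnzd _ ?_)
    rw [← mul_assoc, ← pow_succ']
    exact hf

/-- The set defining the satiety is nonempty, hence the satiety enjoys the defining
property. -/
lemma sat_prop : ∀ l, satiety (Ih) ≤ l → ∀ f : MvPolynomial (Fin (nv + 1)) K,
    f.IsHomogeneous l → (f ∈ (Ih) ↔ f ∈ maxSat (Ih)) := by
  obtain ⟨s0, hs0⟩ := exists_sat_bound (hIcomp F)
  have hne : {s : ℕ | ∀ l, s ≤ l → ∀ f : MvPolynomial (Fin (nv + 1)) K, f.IsHomogeneous l →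
      (f ∈ (Ih) ↔ f ∈ maxSat (Ih))}.Nonempty :=
    ⟨s0, fun l hl f hf => ⟨fun h => ideal_le_maxSat _ h, fun h => hs0 l hl f hf h⟩⟩
  exact Nat.sInf_mem hne

/-- Homogenization of ideal members lands in the saturation. -/
lemma phi_mem_maxSat (hnzd : ∀ f, X 0 * f ∈ maxSat (Ih) → f ∈ maxSat (Ih))
    {f : MvPolynomial (Fin nv) K} (hf : f ∈ Ideal.span (Set.range F))
    {d : ℕ} (hd : f.totalDegree ≤ d) : phi d f ∈ maxSat (Ih) := by
  obtain ⟨c, hc⟩ := Ideal.mem_span_range_iff_exists_fun.mp hf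
  obtain ⟨k, hDk⟩ : ∃ k, max d (Finset.univ.sup fun i => (c i).totalDegree + (F i).totalDegree)
      = d + k :=
    ⟨max d (Finset.univ.sup fun i => (c i).totalDegree + (F i).totalDegree) - d, by omega⟩
  set D := max d (Finset.univ.sup fun i => (c i).totalDegree + (F i).totalDegree) with hD
  have hphiD : phi D f ∈ (Ih) := by
    rw [← hc, map_sum]
    refine Ideal.sum_mem _ fun i _ => ?_
    by_cases hzero : c i * F i = 0
    · rw [hzero, map_zero]
      exact Ideal.zero_mem _
    · have hci : (c i).totalDegree + (F i).totalDegree ≤ D := by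
        have h1 : (c i).totalDegree + (F i).totalDegree
            ≤ Finset.univ.sup fun i => (c i).totalDegree + (F i).totalDegree :=
          Finset.le_sup (f := fun i => (c i).totalDegree + (F i).totalDegree)
            (Finset.mem_univ i)
        exact h1.trans (le_max_right _ _)
      have hsplit : D = (D - (F i).totalDegree) + (F i).totalDegree := by omega
      rw [hsplit, phi_mul (by omega) le_rfl, ← homogPoly_eq_phi]
      exact Ideal.mul_mem_left _ _ (Ideal.subset_span ⟨F i, ⟨i, rfl⟩, rfl⟩)
  rw [hDk, phi_shift hd] at hphiD
  exact nzd_pow F hnzd k _ (ideal_le_maxSat _ hphiD)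

/-- Main representation result: degree ≤ d members of the ideal lie in the Macaulay span. -/
lemma main_repr (hnzd : ∀ f, X 0 * f ∈ maxSat (Ih) → f ∈ maxSat (Ih))
    {d : ℕ} (hsat : satiety (Ih) ≤ d) {f : MvPolynomial (Fin nv) K}
    (hf : f ∈ Ideal.span (Set.range F)) (hdeg : f.totalDegree ≤ d) :
    f ∈ Wsp F d := by
  have hphi : phi d f ∈ (Ih) :=
    (sat_prop F d hsat _ (isHomogeneous_phi hdeg)).mpr (phi_mem_maxSat F hnzd hf hdeg)
  rw [hIh_span] at hphi
  obtain ⟨p, hp⟩ := Ideal.mem_span_range_iff_exists_fun.mp hphi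
  have hcomp : phi d f = ∑ i, (if (F i).totalDegree ≤ d then
      homogeneousComponent (d - (F i).totalDegree) (p i) else 0) * homogPoly (F i) := by
    have h1 : phi d f = homogeneousComponent d (phi d f) := by
      rw [homogeneousComponent_of_mem
        ((mem_homogeneousSubmodule _ _).mpr (isHomogeneous_phi hdeg)), if_pos rfl]
    rw [h1, ← hp, map_sum]
    exact Finset.sum_congr rfl fun i _ => comp_mul_homog (homogPoly_isHom (F i)) _ _
  refine ⟨fun i => dehomAlg nv (if (F i).totalDegree ≤ d then
      homogeneousComponent (d - (F i).totalDegree) (p i) else 0), ?_, ?_⟩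
  · have := congrArg (dehomAlg nv) hcomp
    rw [dehom_phi, map_sum] at this
    rw [this]
    exact Finset.sum_congr rfl fun i _ => by rw [map_mul, dehom_homogPoly]
  · intro i
    by_cases hle : (F i).totalDegree ≤ d
    · have h2 : (dehomAlg nv (homogeneousComponent (d - (F i).totalDegree)
          (p i))).totalDegree ≤ d - (F i).totalDegree :=
        dehom_totalDegree_le (homogeneousComponent_isHomogeneous _ _)
      have h3 := totalDegree_mul (dehomAlg nv (homogeneousComponent (d - (F i).totalDegree)
          (p i))) (F i)
      simp only [if_pos hle]
      omega
    · simp only [if_neg hle, map_zero, zero_mul, totalDegree_zero]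
      exact Nat.zero_le _

/-- Reverse inclusion: the Macaulay span consists of degree ≤ d ideal elements. -/
lemma wsp_sub {d : ℕ} {f : MvPolynomial (Fin nv) K} (hf : f ∈ Wsp F d) :
    f ∈ Ideal.span (Set.range F) ∧ f.totalDegree ≤ d := by
  obtain ⟨g, rfl, hdeg⟩ := hf
  constructor
  · exact Ideal.sum_mem _ fun i _ =>
      Ideal.mul_mem_left _ _ (Ideal.subset_span ⟨i, rfl⟩)
  · exact le_trans (totalDegree_finset_sum _ _) (Finset.sup_le fun i _ => hdeg i)

/-- Lower bound: if all ideal elements fall in the Macaulay spans at level e, then the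
satiety is at most e. -/
lemma lower_bound (hnzd : ∀ f, X 0 * f ∈ maxSat (Ih) → f ∈ maxSat (Ih))
    {e : ℕ} (he : ∀ f ∈ Ideal.span (Set.range F), f ∈ Wsp F (max e f.totalDegree)) :
    satiety (Ih) ≤ e := by
  by_contra hlt
  push_neg at hlt
  have hnotmem : (satiety (Ih) - 1) ∉ {s : ℕ | ∀ l, s ≤ l →
      ∀ f : MvPolynomial (Fin (nv + 1)) K, f.IsHomogeneous l →
      (f ∈ (Ih) ↔ f ∈ maxSat (Ih))} := by
    intro hmem
    have := Nat.sInf_le hmem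
    have heq : satiety (Ih) = sInf {s : ℕ | ∀ l, s ≤ l →
        ∀ f : MvPolynomial (Fin (nv + 1)) K, f.IsHomogeneous l →
        (f ∈ (Ih) ↔ f ∈ maxSat (Ih))} := rfl
    omega
  simp only [Set.mem_setOf_eq] at hnotmem
  push_neg at hnotmem
  obtain ⟨l, hl, f, hfhom, hniff⟩ := hnotmem
  have hfm : f ∈ maxSat (Ih) ∧ f ∉ (Ih) := by
    rcases hniff with ⟨hI, hns⟩ | ⟨hnI, hs⟩
    · exact absurd (ideal_le_maxSat _ hI) hns
    · exact ⟨hs, hnI⟩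
  have hlsat : l < satiety (Ih) := by
    by_contra h
    push_neg at h
    have hiff := sat_prop F l h f hfhom
    rcases hniff with ⟨hI, hns⟩ | ⟨hnI, hs⟩
    · exact hns (hiff.mp hI)
    · exact hnI (hiff.mpr hs)
  -- dehomogenize
  set g := dehomAlg nv f with hgdef
  have hgI : g ∈ Ideal.span (Set.range F) := by
    obtain ⟨k, hk⟩ := mem_maxSat_iff.mp hfm.1
    have hXk : (X 0 : MvPolynomial (Fin (nv + 1)) K) ^ k ∈
        (Ideal.span (Set.range (X : Fin (nv + 1) → MvPolynomial (Fin (nv + 1)) K))) ^ k :=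
      Ideal.pow_mem_pow (Ideal.subset_span (Set.mem_range_self 0)) k
    have h1 : f * X 0 ^ k ∈ (Ih) := by
      have := Submodule.mem_colon.mp hk _ hXk
      rwa [smul_eq_mul] at this
    have h2 : dehomAlg nv (f * X 0 ^ k) ∈
        Ideal.map (dehomAlg nv : MvPolynomial (Fin (nv + 1)) K →ₐ[K]
          MvPolynomial (Fin nv) K).toRingHom (Ih) :=
      Ideal.mem_map_of_mem _ h1
    have h3 : dehomAlg nv (f * X 0 ^ k) = g := by
      rw [map_mul, map_pow, dehom_X_zero, one_pow, mul_one]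
    rw [h3] at h2
    refine Set.mem_of_mem_of_subset h2 ?_
    rw [Ideal.map_span]
    refine Ideal.span_le.mpr ?_
    rintro x ⟨y, ⟨z, ⟨i, rfl⟩, rfl⟩, rfl⟩
    have : (dehomAlg nv : MvPolynomial (Fin (nv + 1)) K →ₐ[K]
        MvPolynomial (Fin nv) K).toRingHom (homogPoly (F i)) = F i := dehom_homogPoly _
    rw [this]
    exact Ideal.subset_span ⟨i, rfl⟩
  obtain ⟨w, hsum, hwdeg⟩ := he g hgI
  set d := max e g.totalDegree with hd
  have hgl : g.totalDegree ≤ l := dehom_totalDegree_le hfhom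
  have hdl : d ≤ l := by
    rw [hd]
    refine max_le ?_ hgl
    omega
  have hphid : phi d g ∈ (Ih) := by
    rw [hsum, map_sum]
    refine Ideal.sum_mem _ fun i _ => ?_
    by_cases hzero : w i * F i = 0
    · rw [hzero, map_zero]
      exact Ideal.zero_mem _
    · have hwi : w i ≠ 0 := fun h => hzero (by rw [h, zero_mul])
      have hFi : F i ≠ 0 := fun h => hzero (by rw [h, mul_zero])
      have hdegmul : (w i).totalDegree + (F i).totalDegree ≤ d := by
        rw [← totalDegree_mul_eq hwi hFi]
        exact hwdeg i
      have hsplit : d = (d - (F i).totalDegree) + (F i).totalDegree := by omega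
      rw [hsplit, phi_mul (by omega) le_rfl, ← homogPoly_eq_phi]
      exact Ideal.mul_mem_left _ _ (Ideal.subset_span ⟨F i, ⟨i, rfl⟩, rfl⟩)
  have hfphil : f = phi l g := (phi_dehom hfhom).symm
  obtain ⟨k, hlk⟩ : ∃ k, l = d + k := ⟨l - d, by omega⟩
  refine hfm.2 ?_
  rw [hfphil, hlk, phi_shift (le_max_right _ _)]
  exact Ideal.mul_mem_left _ _ hphid

end S16main
/-- If `(F^h)` is in generic coordinates with nonempty projective zero locus,
then for every `d ≥ sat((F^h))` one has `(F)_{≤ d} = W_{F,d}`; consequently the last fall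
degree equals the satiety and every degree fall is at most the satiety. -/
theorem stmt_16 {K : Type*} [Field K] [IsAlgClosed K] {nv mI : ℕ}
    (F : Fin mI → MvPolynomial (Fin nv) K)
    (hgen : GenCoords (0 : Fin (nv + 1)) (Ideal.span (homogPoly '' Set.range F)))
    (hne : (projZerosBar (Ideal.span (homogPoly '' Set.range F))).Nonempty) :
    (∀ d : ℕ, satiety (Ideal.span (homogPoly '' Set.range F)) ≤ d →
      {f | f ∈ Ideal.span (Set.range F) ∧ f.totalDegree ≤ d} = Wsp F d)
    ∧ lastFall F = ((satiety (Ideal.span (homogPoly '' Set.range F)) : ℕ) : ℕ∞)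
    ∧ ∀ f ∈ Ideal.span (Set.range F), f.totalDegree < dfall F f →
        dfall F f ≤ satiety (Ideal.span (homogPoly '' Set.range F)) := by
  classical
  have hnzd : ∀ f, X 0 * f ∈ maxSat (Ideal.span (homogPoly '' Set.range F)) →
      f ∈ maxSat (Ideal.span (homogPoly '' Set.range F)) := by
    rcases hgen.2 with hempty | hnz
    · exact absurd hempty (Set.nonempty_iff_ne_empty.mp hne)
    · exact hnz
  have main : ∀ d : ℕ, satiety (Ideal.span (homogPoly '' Set.range F)) ≤ d →
      {f | f ∈ Ideal.span (Set.range F) ∧ f.totalDegree ≤ d} = Wsp F d := by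
    intro d hd
    ext f
    constructor
    · rintro ⟨hf, hdeg⟩
      exact S16main.main_repr F hnzd hd hf hdeg
    · intro hf
      exact S16main.wsp_sub F hf
  refine ⟨main, ?_, ?_⟩
  · rw [lastFall]
    apply le_antisymm
    · refine sInf_le ?_
      intro e he f hf
      have he' : satiety (Ideal.span (homogPoly '' Set.range F)) = e := Nat.cast_inj.mp he
      subst he'
      exact S16main.main_repr F hnzd (le_max_left _ _) hf (le_max_right _ _)
    · refine le_sInf fun b hb => ?_
      induction b using ENat.recTopCoe with
      | top => exact le_top
      | coe e =>
        have hprop := hb e rfl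
        exact_mod_cast S16main.lower_bound F hnzd hprop
  · intro f hf hlt
    have hmem : f ∈ Wsp F
        (max (satiety (Ideal.span (homogPoly '' Set.range F))) f.totalDegree) :=
      S16main.main_repr F hnzd (le_max_left _ _) hf (le_max_right _ _)
    have h1 : dfall F f
        ≤ max (satiety (Ideal.span (homogPoly '' Set.range F))) f.totalDegree :=
      Nat.sInf_le hmem
    rcases le_total (satiety (Ideal.span (homogPoly '' Set.range F))) f.totalDegree with h | h
    · rw [max_eq_right h] at h1
      omega
    · rw [max_eq_left h] at h1
      exact h1
end
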